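/- arXiv:1210.4433 — 6 statements merged into one kernel-verified Lean document; each statement's English description precedes it below -/
import Mathlib

section
/- Let Λ = {λ_n} with λ_n = n·γ_n, where {γ_n} is a nonincreasing sequence of positive numbers. If ∑_{n=1}^∞ γ_n/n < ∞, then every function f of bounded partial Λ-variation has bounded harmonic variation, i.e. PΛBV ⊆ HBV; more precisely, HV_{1,2}(f) ≤ C·(ΛV_1(f) + ΛV_2(f)) for a constant C depending only on Λ, so ΛV_1(f)+ΛV_2(f) < ∞ implies HV_1(f)+HV_2(f)+HV_{1,2}(f) < ∞. -/
open Real Filter Topology MeasureTheory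
open scoped ENNReal NNReal BigOperators

noncomputable section

/-- `f` is `2π`-periodic in each variable. -/
def Periodic2 (f : ℝ → ℝ → ℝ) : Prop :=
  ∀ x y : ℝ, f (x + 2 * π) y = f x y ∧ f x (y + 2 * π) = f x y

/-- A finite family of pairwise nonoverlapping (nondegenerate) subintervals of `[0, 2π]`,
each interval given by its pair (left endpoint, right endpoint). -/
def Nonoverlapping {n : ℕ} (I : Fin n → ℝ × ℝ) : Prop :=
  (∀ i, 0 ≤ (I i).1 ∧ (I i).1 < (I i).2 ∧ (I i).2 ≤ 2 * π) ∧
  (∀ i j, i ≠ j → (I i).2 ≤ (I j).1 ∨ (I j).2 ≤ (I i).1)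

/-- `f(I, y) = f(b, y) - f(a, y)` for `I = (a, b)`. -/
def incr1 (f : ℝ → ℝ → ℝ) (I : ℝ × ℝ) (y : ℝ) : ℝ := f I.2 y - f I.1 y

/-- `f(x, J) = f(x, d) - f(x, c)` for `J = (c, d)`. -/
def incr2 (f : ℝ → ℝ → ℝ) (x : ℝ) (J : ℝ × ℝ) : ℝ := f x J.2 - f x J.1

/-- The mixed difference `f(I, J)` for `I = (a, b)`, `J = (c, d)`. -/
def incr12 (f : ℝ → ℝ → ℝ) (I J : ℝ × ℝ) : ℝ :=
  f I.1 J.1 - f I.1 J.2 - f I.2 J.1 + f I.2 J.2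

/-- `ΛV₁(f)`: the partial `Λ`-variation of `f` in the first variable. -/
def Var1 (Λ : ℕ → ℝ) (f : ℝ → ℝ → ℝ) : ℝ≥0∞ :=
  ⨆ (y : ℝ) (n : ℕ) (I : {I : Fin n → ℝ × ℝ // Nonoverlapping I}),
    ∑ i : Fin n, ENNReal.ofReal (|incr1 f (I.1 i) y| / Λ (i.1 + 1))

/-- `ΛV₂(f)`: the partial `Λ`-variation of `f` in the second variable. -/
def Var2 (Λ : ℕ → ℝ) (f : ℝ → ℝ → ℝ) : ℝ≥0∞ :=
  ⨆ (x : ℝ) (m : ℕ) (J : {J : Fin m → ℝ × ℝ // Nonoverlapping J}),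
    ∑ j : Fin m, ENNReal.ofReal (|incr2 f x (J.1 j)| / Λ (j.1 + 1))

/-- `ΛV₁,₂(f)`: the mixed `Λ`-variation of `f`. -/
def Var12 (Λ : ℕ → ℝ) (f : ℝ → ℝ → ℝ) : ℝ≥0∞ :=
  ⨆ (n : ℕ) (m : ℕ) (I : {I : Fin n → ℝ × ℝ // Nonoverlapping I})
    (J : {J : Fin m → ℝ × ℝ // Nonoverlapping J}),
    ∑ i : Fin n, ∑ j : Fin m,
      ENNReal.ofReal (|incr12 f (I.1 i) (J.1 j)| / (Λ (i.1 + 1) * Λ (j.1 + 1)))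

/-- The harmonic sequence `λ_n = n` (giving harmonic variation `HV`). -/
def harmonicSeq : ℕ → ℝ := fun n => (n : ℝ)

/-- The constant sequence `λ_n = 1` (giving ordinary (Hardy) variation). -/
def oneSeq : ℕ → ℝ := fun _ => 1

/-- The partial modulus of variation `v₁(n, f)`. -/
def modulus1 (f : ℝ → ℝ → ℝ) (n : ℕ) : ℝ≥0∞ :=
  ⨆ (y : ℝ) (I : {I : Fin n → ℝ × ℝ // Nonoverlapping I}),
    ∑ i : Fin n, ENNReal.ofReal |incr1 f (I.1 i) y|

/-- The partial modulus of variation `v₂(m, f)`. -/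
def modulus2 (f : ℝ → ℝ → ℝ) (m : ℕ) : ℝ≥0∞ :=
  ⨆ (x : ℝ) (J : {J : Fin m → ℝ × ℝ // Nonoverlapping J}),
    ∑ j : Fin m, ENNReal.ofReal |incr2 f x (J.1 j)|

/-- The `Λ`-variation of a function of one variable on `[0, 2π]`. -/
def VarG (Λ : ℕ → ℝ) (g : ℝ → ℝ) : ℝ≥0∞ :=
  ⨆ (n : ℕ) (I : {I : Fin n → ℝ × ℝ // Nonoverlapping I}),
    ∑ i : Fin n, ENNReal.ofReal (|g (I.1 i).2 - g (I.1 i).1| / Λ (i.1 + 1))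

/-- The norm `‖f‖_C + ΛV₁(f) + ΛV₂(f)` (with values in `ℝ≥0∞`). -/
def PNorm (Λ : ℕ → ℝ) (f : ℝ → ℝ → ℝ) : ℝ≥0∞ :=
  (⨆ (x : ℝ) (y : ℝ), ENNReal.ofReal |f x y|) + Var1 Λ f + Var2 Λ f

/-- The Fourier coefficient `f̂(m, n)` of a (`2π`-periodic in each variable) function. -/
def fourierCoef (f : ℝ → ℝ → ℝ) (m n : ℤ) : ℂ :=
  (1 / (4 * (π : ℂ) ^ 2)) *
    ∫ x in (0:ℝ)..(2 * π), ∫ y in (0:ℝ)..(2 * π),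
      (f x y : ℂ) * Complex.exp (-Complex.I * m * x) * Complex.exp (-Complex.I * n * y)

/-- The rectangular partial sum `S_{M,N}[f](x, y)` of the double Fourier series of `f`. -/
def partialSum (f : ℝ → ℝ → ℝ) (M N : ℕ) (x y : ℝ) : ℂ :=
  ∑ m ∈ Finset.Icc (-(M : ℤ)) (M : ℤ), ∑ n ∈ Finset.Icc (-(N : ℤ)) (N : ℤ),
    fourierCoef f m n * Complex.exp (Complex.I * m * x) * Complex.exp (Complex.I * n * y)

/-- Pringsheim convergence of the rectangular partial sums at `(x, y)` to `L`. -/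
def PringsheimConv (f : ℝ → ℝ → ℝ) (x y L : ℝ) : Prop :=
  ∀ ε : ℝ, 0 < ε → ∃ N₀ : ℕ, ∀ M N : ℕ, N₀ ≤ M → N₀ ≤ N →
    ‖partialSum f M N x y - (L : ℂ)‖ < ε

/-- The four open-quadrant limits `f(x±0, y±0)` exist and equal `Lpp, Lpm, Lmp, Lmm`. -/
def QuadLimits (f : ℝ → ℝ → ℝ) (x y Lpp Lpm Lmp Lmm : ℝ) : Prop :=
  Tendsto (fun p : ℝ × ℝ => f p.1 p.2) ((𝓝[>] x) ×ˢ (𝓝[>] y)) (𝓝 Lpp) ∧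
  Tendsto (fun p : ℝ × ℝ => f p.1 p.2) ((𝓝[>] x) ×ˢ (𝓝[<] y)) (𝓝 Lpm) ∧
  Tendsto (fun p : ℝ × ℝ => f p.1 p.2) ((𝓝[<] x) ×ˢ (𝓝[>] y)) (𝓝 Lmp) ∧
  Tendsto (fun p : ℝ × ℝ => f p.1 p.2) ((𝓝[<] x) ×ˢ (𝓝[<] y)) (𝓝 Lmm)

section Statement0Aux

private lemma s0_wpos (k : ℕ) : (0:ℝ) < ((k+1 : ℕ) : ℝ) := by
  exact_mod_cast Nat.succ_pos k

/-- Extract a real-valued bound from an `ENNReal` bound on a sum of `ofReal`s. -/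
private lemma s0_real_of_bound {ι : Type*} [Fintype ι] (V : ℝ≥0∞) (hV : V ≠ ⊤)
    (g : ι → ℝ) (hg : ∀ j, 0 ≤ g j)
    (h : ∑ j : ι, ENNReal.ofReal (g j) ≤ V) : ∑ j : ι, g j ≤ V.toReal := by
  rw [← ENNReal.ofReal_sum_of_nonneg (fun j _ => hg j)] at h
  exact (ENNReal.ofReal_le_iff_le_toReal hV).mp h

/-- The core combinatorial inequality, proved by a double Cauchy–Schwarz argument. -/
private lemma s0_matrix_bound {n m : ℕ} (γ : ℕ → ℝ) (hγpos : ∀ k, 0 < γ k)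
    (d : Fin n → Fin m → ℝ) (hd : ∀ i j, 0 ≤ d i j)
    (A v₁ v₂ : ℝ) (hv₁ : 0 ≤ v₁) (hv₂ : 0 ≤ v₂)
    (hA1 : ∑ i : Fin n, γ (i.1 + 1) / ((i.1 + 1 : ℕ) : ℝ) ≤ A)
    (hA2 : ∑ j : Fin m, γ (j.1 + 1) / ((j.1 + 1 : ℕ) : ℝ) ≤ A)
    (hrow : ∀ i, ∑ j : Fin m, d i j / (((j.1 + 1 : ℕ) : ℝ) * γ (j.1 + 1)) ≤ v₂)
    (hcol : ∀ j, ∑ i : Fin n, d i j / (((i.1 + 1 : ℕ) : ℝ) * γ (i.1 + 1)) ≤ v₁) :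
    ∑ i : Fin n, ∑ j : Fin m, d i j / (((i.1 + 1 : ℕ) : ℝ) * ((j.1 + 1 : ℕ) : ℝ))
      ≤ A * (v₁ + v₂) := by
  have hA0 : 0 ≤ A := le_trans (Finset.sum_nonneg fun j _ =>
    div_nonneg (hγpos _).le (s0_wpos j.1).le) hA2
  have hlampos : ∀ k : ℕ, (0:ℝ) < ((k + 1 : ℕ) : ℝ) * γ (k + 1) :=
    fun k => mul_pos (s0_wpos k) (hγpos _)
  -- the auxiliary row quantities
  set t : Fin n → ℝ := fun i => ∑ j : Fin m, d i j * (γ (j.1+1) / ((j.1+1 : ℕ) : ℝ))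
    with ht_def
  have hy0 : ∀ (i : Fin n) (j : Fin m), 0 ≤ d i j * (γ (j.1+1) / ((j.1+1 : ℕ) : ℝ)) :=
    fun i j => mul_nonneg (hd i j) (div_nonneg (hγpos _).le (s0_wpos j.1).le)
  have hx0 : ∀ (i : Fin n) (j : Fin m), 0 ≤ d i j / (((j.1+1 : ℕ) : ℝ) * γ (j.1+1)) :=
    fun i j => div_nonneg (hd i j) (hlampos j.1).le
  have ht0 : ∀ i, 0 ≤ t i := fun i => Finset.sum_nonneg fun j _ => hy0 i j
  -- first Cauchy–Schwarz, in each row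
  have hr : ∀ i, ∑ j : Fin m, d i j / ((j.1+1 : ℕ) : ℝ)
      ≤ Real.sqrt v₂ * Real.sqrt (t i) := by
    intro i
    have e1 : ∀ j : Fin m, d i j / ((j.1+1 : ℕ) : ℝ)
        = Real.sqrt (d i j / (((j.1+1 : ℕ) : ℝ) * γ (j.1+1)))
          * Real.sqrt (d i j * (γ (j.1+1) / ((j.1+1 : ℕ) : ℝ))) := by
      intro j
      rw [← Real.sqrt_mul (hx0 i j)]
      have hprod : d i j / (((j.1+1 : ℕ) : ℝ) * γ (j.1+1))
            * (d i j * (γ (j.1+1) / ((j.1+1 : ℕ) : ℝ)))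
          = (d i j / ((j.1+1 : ℕ) : ℝ))^2 := by
        have h1 : ((j.1+1 : ℕ) : ℝ) ≠ 0 := (s0_wpos j.1).ne'
        have h2 : γ (j.1+1) ≠ 0 := (hγpos _).ne'
        field_simp
      rw [hprod]
      exact (Real.sqrt_sq (div_nonneg (hd i j) (s0_wpos j.1).le)).symm
    calc ∑ j : Fin m, d i j / ((j.1+1 : ℕ) : ℝ)
        = ∑ j : Fin m, Real.sqrt (d i j / (((j.1+1 : ℕ) : ℝ) * γ (j.1+1)))
            * Real.sqrt (d i j * (γ (j.1+1) / ((j.1+1 : ℕ) : ℝ))) :=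
          Finset.sum_congr rfl fun j _ => e1 j
      _ ≤ Real.sqrt (∑ j : Fin m, d i j / (((j.1+1 : ℕ) : ℝ) * γ (j.1+1)))
            * Real.sqrt (∑ j : Fin m, d i j * (γ (j.1+1) / ((j.1+1 : ℕ) : ℝ))) :=
          Real.sum_sqrt_mul_sqrt_le _ (fun j => hx0 i j) (fun j => hy0 i j)
      _ ≤ Real.sqrt v₂ * Real.sqrt (t i) :=
          mul_le_mul_of_nonneg_right (Real.sqrt_le_sqrt (hrow i)) (Real.sqrt_nonneg _)
  -- second Cauchy–Schwarz, over the rows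
  have key2 : ∑ i : Fin n, Real.sqrt (t i) / ((i.1+1 : ℕ) : ℝ)
      ≤ Real.sqrt A * Real.sqrt (v₁ * A) := by
    have e2 : ∀ i : Fin n, Real.sqrt (t i) / ((i.1+1 : ℕ) : ℝ)
        = Real.sqrt (γ (i.1+1) / ((i.1+1 : ℕ) : ℝ))
          * Real.sqrt (t i / (((i.1+1 : ℕ) : ℝ) * γ (i.1+1))) := by
      intro i
      rw [← Real.sqrt_mul (div_nonneg (hγpos _).le (s0_wpos i.1).le)]
      have hprod : γ (i.1+1) / ((i.1+1 : ℕ) : ℝ) * (t i / (((i.1+1 : ℕ) : ℝ) * γ (i.1+1)))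
          = t i / ((i.1+1 : ℕ) : ℝ)^2 := by
        have h1 : ((i.1+1 : ℕ) : ℝ) ≠ 0 := (s0_wpos i.1).ne'
        have h2 : γ (i.1+1) ≠ 0 := (hγpos _).ne'
        field_simp
      rw [hprod]
      have hsq : t i / ((i.1+1 : ℕ) : ℝ)^2 = (Real.sqrt (t i) / ((i.1+1 : ℕ) : ℝ))^2 := by
        rw [div_pow, Real.sq_sqrt (ht0 i)]
      rw [hsq]
      exact (Real.sqrt_sq (div_nonneg (Real.sqrt_nonneg _) (s0_wpos i.1).le)).symm
    have hZ : ∑ i : Fin n, t i / (((i.1+1 : ℕ) : ℝ) * γ (i.1+1)) ≤ v₁ * A := by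
      have swap : ∑ i : Fin n, t i / (((i.1+1 : ℕ) : ℝ) * γ (i.1+1))
          = ∑ j : Fin m, (γ (j.1+1) / ((j.1+1 : ℕ) : ℝ))
              * ∑ i : Fin n, d i j / (((i.1+1 : ℕ) : ℝ) * γ (i.1+1)) := by
        simp only [ht_def, Finset.sum_div, Finset.mul_sum]
        rw [Finset.sum_comm]
        refine Finset.sum_congr rfl fun j _ => Finset.sum_congr rfl fun i _ => ?_
        ring
      rw [swap]
      calc ∑ j : Fin m, (γ (j.1+1) / ((j.1+1 : ℕ) : ℝ))
              * ∑ i : Fin n, d i j / (((i.1+1 : ℕ) : ℝ) * γ (i.1+1))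
          ≤ ∑ j : Fin m, (γ (j.1+1) / ((j.1+1 : ℕ) : ℝ)) * v₁ := by
            refine Finset.sum_le_sum fun j _ => ?_
            exact mul_le_mul_of_nonneg_left (hcol j)
              (div_nonneg (hγpos _).le (s0_wpos j.1).le)
        _ = (∑ j : Fin m, γ (j.1+1) / ((j.1+1 : ℕ) : ℝ)) * v₁ := by
            rw [Finset.sum_mul]
        _ ≤ A * v₁ := mul_le_mul_of_nonneg_right hA2 hv₁
        _ = v₁ * A := mul_comm _ _
    calc ∑ i : Fin n, Real.sqrt (t i) / ((i.1+1 : ℕ) : ℝ)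
        = ∑ i : Fin n, Real.sqrt (γ (i.1+1) / ((i.1+1 : ℕ) : ℝ))
            * Real.sqrt (t i / (((i.1+1 : ℕ) : ℝ) * γ (i.1+1))) :=
          Finset.sum_congr rfl fun i _ => e2 i
      _ ≤ Real.sqrt (∑ i : Fin n, γ (i.1+1) / ((i.1+1 : ℕ) : ℝ))
            * Real.sqrt (∑ i : Fin n, t i / (((i.1+1 : ℕ) : ℝ) * γ (i.1+1))) :=
          Real.sum_sqrt_mul_sqrt_le _
            (fun i => div_nonneg (hγpos _).le (s0_wpos i.1).le)
            (fun i => div_nonneg (ht0 i) (hlampos i.1).le)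
      _ ≤ Real.sqrt A * Real.sqrt (v₁ * A) :=
          mul_le_mul (Real.sqrt_le_sqrt hA1) (Real.sqrt_le_sqrt hZ)
            (Real.sqrt_nonneg _) (Real.sqrt_nonneg _)
  -- assembling
  have main : ∑ i : Fin n, ∑ j : Fin m, d i j / (((i.1+1 : ℕ) : ℝ) * ((j.1+1 : ℕ) : ℝ))
      ≤ Real.sqrt v₂ * (Real.sqrt A * Real.sqrt (v₁ * A)) := by
    have step1 : ∀ i : Fin n,
        ∑ j : Fin m, d i j / (((i.1+1 : ℕ) : ℝ) * ((j.1+1 : ℕ) : ℝ))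
        = (∑ j : Fin m, d i j / ((j.1+1 : ℕ) : ℝ)) / ((i.1+1 : ℕ) : ℝ) := by
      intro i
      rw [Finset.sum_div]
      refine Finset.sum_congr rfl fun j _ => ?_
      rw [div_div]
      ring_nf
    calc ∑ i : Fin n, ∑ j : Fin m, d i j / (((i.1+1 : ℕ) : ℝ) * ((j.1+1 : ℕ) : ℝ))
        = ∑ i : Fin n, (∑ j : Fin m, d i j / ((j.1+1 : ℕ) : ℝ)) / ((i.1+1 : ℕ) : ℝ) :=
          Finset.sum_congr rfl fun i _ => step1 i
      _ ≤ ∑ i : Fin n, (Real.sqrt v₂ * Real.sqrt (t i)) / ((i.1+1 : ℕ) : ℝ) := by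
          refine Finset.sum_le_sum fun i _ => ?_
          exact div_le_div_of_nonneg_right (hr i) (s0_wpos i.1).le
      _ = Real.sqrt v₂ * ∑ i : Fin n, Real.sqrt (t i) / ((i.1+1 : ℕ) : ℝ) := by
          rw [Finset.mul_sum]
          exact Finset.sum_congr rfl fun i _ => by rw [mul_div_assoc]
      _ ≤ Real.sqrt v₂ * (Real.sqrt A * Real.sqrt (v₁ * A)) :=
          mul_le_mul_of_nonneg_left key2 (Real.sqrt_nonneg _)
  refine main.trans ?_
  have expand : Real.sqrt v₂ * (Real.sqrt A * Real.sqrt (v₁ * A))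
      = (Real.sqrt A * Real.sqrt A) * (Real.sqrt v₁ * Real.sqrt v₂) := by
    rw [Real.sqrt_mul hv₁]
    ring
  rw [expand, Real.mul_self_sqrt hA0]
  have amgm : Real.sqrt v₁ * Real.sqrt v₂ ≤ v₁ + v₂ := by
    have h2 := two_mul_le_add_sq (Real.sqrt v₁) (Real.sqrt v₂)
    rw [Real.sq_sqrt hv₁, Real.sq_sqrt hv₂] at h2
    nlinarith [Real.sqrt_nonneg v₁, Real.sqrt_nonneg v₂]
  exact mul_le_mul_of_nonneg_left amgm hA0

end Statement0Aux

/-- if `λ_n = n·γ_n` with `γ` nonincreasing positive and `∑ γ_n/n < ∞`,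
then `PΛBV ⊆ HBV`; more precisely `HV₁,₂(f) ≤ C(ΛV₁(f) + ΛV₂(f))` with `C` depending
only on `Λ`, and finiteness of `ΛV₁(f) + ΛV₂(f)` implies finiteness of the full
harmonic variation. -/
theorem statement0 (γ : ℕ → ℝ) (hγpos : ∀ n, 0 < γ n)
    (hγmono : ∀ n, γ (n + 1) ≤ γ n)
    (hsum : Summable (fun n : ℕ => γ (n + 1) / ((n : ℝ) + 1))) :
    ∃ C : ℝ≥0, ∀ f : ℝ → ℝ → ℝ, Periodic2 f →
      (Var12 harmonicSeq f ≤
        (C : ℝ≥0∞) * (Var1 (fun n => (n : ℝ) * γ n) f + Var2 (fun n => (n : ℝ) * γ n) f)) ∧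
      (Var1 (fun n => (n : ℝ) * γ n) f + Var2 (fun n => (n : ℝ) * γ n) f < ⊤ →
        Var1 harmonicSeq f + Var2 harmonicSeq f + Var12 harmonicSeq f < ⊤) := by
  classical
  set Λ : ℕ → ℝ := fun n => (n : ℝ) * γ n with hΛdef
  set A : ℝ := ∑' n : ℕ, γ (n + 1) / ((n : ℝ) + 1) with hAdef
  have hA0 : 0 ≤ A := tsum_nonneg fun n => by
    have h1 := (hγpos (n+1)).le
    have h2 : (0:ℝ) ≤ (n : ℝ) + 1 := by positivity
    positivity
  have hganti : Antitone γ := antitone_nat_of_succ_le hγmono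
  set C : ℝ≥0 := (2 * A).toNNReal + 1 with hCdef
  have hCne : (C : ℝ≥0∞) ≠ 0 := by
    simp [hCdef]
  have hCnetop : (C : ℝ≥0∞) ≠ ⊤ := ENNReal.coe_ne_top
  -- partial sums of ∑ γ (k+1)/(k+1) are bounded by A
  have hpartial : ∀ N : ℕ, ∑ i : Fin N, γ (i.1 + 1) / ((i.1 + 1 : ℕ) : ℝ) ≤ A := by
    intro N
    have e : ∑ i : Fin N, γ (i.1 + 1) / ((i.1 + 1 : ℕ) : ℝ)
        = ∑ k ∈ Finset.range N, γ (k + 1) / ((k : ℝ) + 1) := by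
      rw [Fin.sum_univ_eq_sum_range (fun k => γ (k + 1) / ((k + 1 : ℕ) : ℝ)) N]
      refine Finset.sum_congr rfl fun k _ => ?_
      push_cast
      ring_nf
    rw [e, hAdef]
    exact Summable.sum_le_tsum _ (fun k _ => by
      have h1 := (hγpos (k+1)).le
      have h2 : (0:ℝ) ≤ (k : ℝ) + 1 := by positivity
      positivity) hsum
  refine ⟨C, fun f _hper => ?_⟩
  have key : Var12 harmonicSeq f ≤ (C : ℝ≥0∞) * (Var1 Λ f + Var2 Λ f) := by
    by_cases htop : Var1 Λ f + Var2 Λ f = ⊤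
    · rw [htop, ENNReal.mul_top hCne]
      exact le_top
    · have hV1ne : Var1 Λ f ≠ ⊤ := (ENNReal.add_ne_top.mp htop).1
      have hV2ne : Var2 Λ f ≠ ⊤ := (ENNReal.add_ne_top.mp htop).2
      set v₁ : ℝ := (Var1 Λ f).toReal with hv₁def
      set v₂ : ℝ := (Var2 Λ f).toReal with hv₂def
      have hv₁0 : 0 ≤ v₁ := ENNReal.toReal_nonneg
      have hv₂0 : 0 ≤ v₂ := ENNReal.toReal_nonneg
      -- the fundamental one-dimensional bounds, in real form
      have hrow1 : ∀ (x : ℝ) (m : ℕ) (J : {J : Fin m → ℝ × ℝ // Nonoverlapping J}),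
          ∑ j : Fin m, |incr2 f x (J.1 j)| / (((j.1 + 1 : ℕ) : ℝ) * γ (j.1 + 1)) ≤ v₂ := by
        intro x m J
        refine s0_real_of_bound _ hV2ne _
          (fun j => div_nonneg (abs_nonneg _) (mul_pos (s0_wpos j.1) (hγpos _)).le) ?_
        have : ∑ j : Fin m, ENNReal.ofReal (|incr2 f x (J.1 j)| / Λ (j.1 + 1)) ≤ Var2 Λ f :=
          le_iSup_of_le x (le_iSup_of_le m (le_iSup
            (fun J' : {J' : Fin m → ℝ × ℝ // Nonoverlapping J'} =>
              ∑ j : Fin m, ENNReal.ofReal (|incr2 f x (J'.1 j)| / Λ (j.1 + 1))) J))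
        simpa [hΛdef] using this
      have hcol1 : ∀ (y : ℝ) (n : ℕ) (I : {I : Fin n → ℝ × ℝ // Nonoverlapping I}),
          ∑ i : Fin n, |incr1 f (I.1 i) y| / (((i.1 + 1 : ℕ) : ℝ) * γ (i.1 + 1)) ≤ v₁ := by
        intro y n I
        refine s0_real_of_bound _ hV1ne _
          (fun i => div_nonneg (abs_nonneg _) (mul_pos (s0_wpos i.1) (hγpos _)).le) ?_
        have : ∑ i : Fin n, ENNReal.ofReal (|incr1 f (I.1 i) y| / Λ (i.1 + 1)) ≤ Var1 Λ f :=
          le_iSup_of_le y (le_iSup_of_le n (le_iSup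
            (fun I' : {I' : Fin n → ℝ × ℝ // Nonoverlapping I'} =>
              ∑ i : Fin n, ENNReal.ofReal (|incr1 f (I'.1 i) y| / Λ (i.1 + 1))) I))
        simpa [hΛdef] using this
      unfold Var12
      refine iSup_le fun n => iSup_le fun m => iSup_le fun I => iSup_le fun J => ?_
      set d : Fin n → Fin m → ℝ := fun i j => |incr12 f (I.1 i) (J.1 j)| with hddef
      have hd0 : ∀ i j, 0 ≤ d i j := fun i j => abs_nonneg _
      -- row bound for d
      have hdrow : ∀ i, ∑ j : Fin m, d i j / (((j.1 + 1 : ℕ) : ℝ) * γ (j.1 + 1)) ≤ 2 * v₂ := by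
        intro i
        have hsplit : ∀ j : Fin m, d i j
            ≤ |incr2 f (I.1 i).2 (J.1 j)| + |incr2 f (I.1 i).1 (J.1 j)| := by
          intro j
          have : incr12 f (I.1 i) (J.1 j)
              = incr2 f (I.1 i).2 (J.1 j) - incr2 f (I.1 i).1 (J.1 j) := by
            simp only [incr12, incr2]
            ring
          show |incr12 f (I.1 i) (J.1 j)| ≤ _
          rw [this]
          exact abs_sub _ _
        calc ∑ j : Fin m, d i j / (((j.1 + 1 : ℕ) : ℝ) * γ (j.1 + 1))
            ≤ ∑ j : Fin m, (|incr2 f (I.1 i).2 (J.1 j)| + |incr2 f (I.1 i).1 (J.1 j)|)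
                / (((j.1 + 1 : ℕ) : ℝ) * γ (j.1 + 1)) := by
              refine Finset.sum_le_sum fun j _ => ?_
              have hpos : (0:ℝ) < ((j.1 + 1 : ℕ) : ℝ) * γ (j.1 + 1) :=
                mul_pos (s0_wpos j.1) (hγpos _)
              exact div_le_div_of_nonneg_right (hsplit j) hpos.le
          _ = (∑ j : Fin m, |incr2 f (I.1 i).2 (J.1 j)| / (((j.1 + 1 : ℕ) : ℝ) * γ (j.1 + 1)))
              + ∑ j : Fin m, |incr2 f (I.1 i).1 (J.1 j)| / (((j.1 + 1 : ℕ) : ℝ) * γ (j.1 + 1)) := by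
              rw [← Finset.sum_add_distrib]
              exact Finset.sum_congr rfl fun j _ => add_div _ _ _
          _ ≤ v₂ + v₂ := add_le_add (hrow1 _ m J) (hrow1 _ m J)
          _ = 2 * v₂ := by ring
      -- column bound for d
      have hdcol : ∀ j, ∑ i : Fin n, d i j / (((i.1 + 1 : ℕ) : ℝ) * γ (i.1 + 1)) ≤ 2 * v₁ := by
        intro j
        have hsplit : ∀ i : Fin n, d i j
            ≤ |incr1 f (I.1 i) (J.1 j).2| + |incr1 f (I.1 i) (J.1 j).1| := by
          intro i
          have : incr12 f (I.1 i) (J.1 j)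
              = incr1 f (I.1 i) (J.1 j).2 - incr1 f (I.1 i) (J.1 j).1 := by
            simp only [incr12, incr1]
            ring
          show |incr12 f (I.1 i) (J.1 j)| ≤ _
          rw [this]
          exact abs_sub _ _
        calc ∑ i : Fin n, d i j / (((i.1 + 1 : ℕ) : ℝ) * γ (i.1 + 1))
            ≤ ∑ i : Fin n, (|incr1 f (I.1 i) (J.1 j).2| + |incr1 f (I.1 i) (J.1 j).1|)
                / (((i.1 + 1 : ℕ) : ℝ) * γ (i.1 + 1)) := by
              refine Finset.sum_le_sum fun i _ => ?_
              have hpos : (0:ℝ) < ((i.1 + 1 : ℕ) : ℝ) * γ (i.1 + 1) :=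
                mul_pos (s0_wpos i.1) (hγpos _)
              exact div_le_div_of_nonneg_right (hsplit i) hpos.le
          _ = (∑ i : Fin n, |incr1 f (I.1 i) (J.1 j).2| / (((i.1 + 1 : ℕ) : ℝ) * γ (i.1 + 1)))
              + ∑ i : Fin n, |incr1 f (I.1 i) (J.1 j).1| / (((i.1 + 1 : ℕ) : ℝ) * γ (i.1 + 1)) := by
              rw [← Finset.sum_add_distrib]
              exact Finset.sum_congr rfl fun i _ => add_div _ _ _
          _ ≤ v₁ + v₁ := add_le_add (hcol1 _ n I) (hcol1 _ n I)
          _ = 2 * v₁ := by ring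
      have hS := s0_matrix_bound γ hγpos d hd0 A (2 * v₁) (2 * v₂)
        (by linarith) (by linarith) (hpartial n) (hpartial m) hdrow hdcol
      -- convert the ENNReal double sum
      have hconv : ∑ i : Fin n, ∑ j : Fin m,
          ENNReal.ofReal (|incr12 f (I.1 i) (J.1 j)|
            / (harmonicSeq (i.1 + 1) * harmonicSeq (j.1 + 1)))
          = ENNReal.ofReal (∑ i : Fin n, ∑ j : Fin m,
              d i j / (((i.1 + 1 : ℕ) : ℝ) * ((j.1 + 1 : ℕ) : ℝ))) := by
        rw [ENNReal.ofReal_sum_of_nonneg (fun (i : Fin n) (_ : i ∈ Finset.univ) =>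
          Finset.sum_nonneg fun (j : Fin m) (_ : j ∈ Finset.univ) =>
            div_nonneg (hd0 i j) (mul_nonneg (s0_wpos i.1).le (s0_wpos j.1).le))]
        refine Finset.sum_congr rfl fun i _ => ?_
        rw [ENNReal.ofReal_sum_of_nonneg (fun (j : Fin m) (_ : j ∈ Finset.univ) =>
          div_nonneg (hd0 i j) (mul_nonneg (s0_wpos i.1).le (s0_wpos j.1).le))]
        refine Finset.sum_congr rfl fun j _ => ?_
        simp only [harmonicSeq, hddef]
      calc ∑ i : Fin n, ∑ j : Fin m,
          ENNReal.ofReal (|incr12 f (I.1 i) (J.1 j)|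
            / (harmonicSeq (i.1 + 1) * harmonicSeq (j.1 + 1)))
          = ENNReal.ofReal (∑ i : Fin n, ∑ j : Fin m,
              d i j / (((i.1 + 1 : ℕ) : ℝ) * ((j.1 + 1 : ℕ) : ℝ))) := hconv
        _ ≤ ENNReal.ofReal (A * (2 * v₁ + 2 * v₂)) := ENNReal.ofReal_le_ofReal hS
        _ = ENNReal.ofReal (2 * A) * ENNReal.ofReal (v₁ + v₂) := by
            rw [← ENNReal.ofReal_mul (by positivity)]
            congr 1
            ring
        _ = ENNReal.ofReal (2 * A) * (Var1 Λ f + Var2 Λ f) := by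
            rw [ENNReal.ofReal_add hv₁0 hv₂0, hv₁def, hv₂def,
              ENNReal.ofReal_toReal hV1ne, ENNReal.ofReal_toReal hV2ne]
        _ ≤ (C : ℝ≥0∞) * (Var1 Λ f + Var2 Λ f) := by
            refine mul_le_mul_left ?_ _
            rw [ENNReal.ofReal, hCdef]
            exact_mod_cast (le_self_add : (2*A).toNNReal ≤ (2*A).toNNReal + 1)
  refine ⟨key, fun hfin => ?_⟩
  have hV1ne : Var1 Λ f ≠ ⊤ := (ENNReal.add_ne_top.mp hfin.ne).1
  have hV2ne : Var2 Λ f ≠ ⊤ := (ENNReal.add_ne_top.mp hfin.ne).2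
  -- comparison of harmonic and Λ variations (one-dimensional, in each variable)
  have hcomp1 : Var1 harmonicSeq f ≤ ENNReal.ofReal (γ 1) * Var1 Λ f := by
    unfold Var1
    refine iSup_le fun y => iSup_le fun n => iSup_le fun I => ?_
    calc ∑ i : Fin n, ENNReal.ofReal (|incr1 f (I.1 i) y| / harmonicSeq (i.1 + 1))
        ≤ ∑ i : Fin n, ENNReal.ofReal (γ 1)
            * ENNReal.ofReal (|incr1 f (I.1 i) y| / Λ (i.1 + 1)) := by
          refine Finset.sum_le_sum fun i _ => ?_
          rw [← ENNReal.ofReal_mul (hγpos 1).le]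
          refine ENNReal.ofReal_le_ofReal ?_
          have hγi : γ (i.1 + 1) ≤ γ 1 := hganti (by omega)
          have hwi := s0_wpos i.1
          have hγipos := hγpos (i.1 + 1)
          have habs := abs_nonneg (incr1 f (I.1 i) y)
          simp only [harmonicSeq, hΛdef]
          rw [mul_div_assoc']
          rw [div_le_div_iff₀ hwi (by positivity)]
          nlinarith [mul_le_mul_of_nonneg_left hγi (mul_nonneg habs hwi.le)]
      _ = ENNReal.ofReal (γ 1)
            * ∑ i : Fin n, ENNReal.ofReal (|incr1 f (I.1 i) y| / Λ (i.1 + 1)) := by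
          rw [Finset.mul_sum]
      _ ≤ ENNReal.ofReal (γ 1) * Var1 Λ f := by
          refine mul_le_mul_right ?_ _
          exact le_iSup_of_le y (le_iSup_of_le n (le_iSup
            (fun I' : {I' : Fin n → ℝ × ℝ // Nonoverlapping I'} =>
              ∑ i : Fin n, ENNReal.ofReal (|incr1 f (I'.1 i) y| / Λ (i.1 + 1))) I))
  have hcomp2 : Var2 harmonicSeq f ≤ ENNReal.ofReal (γ 1) * Var2 Λ f := by
    unfold Var2
    refine iSup_le fun x => iSup_le fun m => iSup_le fun J => ?_
    calc ∑ j : Fin m, ENNReal.ofReal (|incr2 f x (J.1 j)| / harmonicSeq (j.1 + 1))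
        ≤ ∑ j : Fin m, ENNReal.ofReal (γ 1)
            * ENNReal.ofReal (|incr2 f x (J.1 j)| / Λ (j.1 + 1)) := by
          refine Finset.sum_le_sum fun j _ => ?_
          rw [← ENNReal.ofReal_mul (hγpos 1).le]
          refine ENNReal.ofReal_le_ofReal ?_
          have hγj : γ (j.1 + 1) ≤ γ 1 := hganti (by omega)
          have hwj := s0_wpos j.1
          have hγjpos := hγpos (j.1 + 1)
          have habs := abs_nonneg (incr2 f x (J.1 j))
          simp only [harmonicSeq, hΛdef]
          rw [mul_div_assoc']
          rw [div_le_div_iff₀ hwj (by positivity)]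
          nlinarith [mul_le_mul_of_nonneg_left hγj (mul_nonneg habs hwj.le)]
      _ = ENNReal.ofReal (γ 1)
            * ∑ j : Fin m, ENNReal.ofReal (|incr2 f x (J.1 j)| / Λ (j.1 + 1)) := by
          rw [Finset.mul_sum]
      _ ≤ ENNReal.ofReal (γ 1) * Var2 Λ f := by
          refine mul_le_mul_right ?_ _
          exact le_iSup_of_le x (le_iSup_of_le m (le_iSup
            (fun J' : {J' : Fin m → ℝ × ℝ // Nonoverlapping J'} =>
              ∑ j : Fin m, ENNReal.ofReal (|incr2 f x (J'.1 j)| / Λ (j.1 + 1))) J))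
  have h1 : Var1 harmonicSeq f < ⊤ :=
    lt_of_le_of_lt hcomp1 (ENNReal.mul_lt_top ENNReal.ofReal_lt_top hV1ne.lt_top)
  have h2 : Var2 harmonicSeq f < ⊤ :=
    lt_of_le_of_lt hcomp2 (ENNReal.mul_lt_top ENNReal.ofReal_lt_top hV2ne.lt_top)
  have h12 : Var12 harmonicSeq f < ⊤ :=
    lt_of_le_of_lt key (ENNReal.mul_lt_top hCnetop.lt_top hfin)
  exact ENNReal.add_lt_top.mpr ⟨ENNReal.add_lt_top.mpr ⟨h1, h2⟩, h12⟩
end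
end

section
/- Every function of bounded partial variation in the sense of Hardy has bounded harmonic variation: if V_1(f):=sup_y sup ∑_i |f(I_i,y)| < ∞ and V_2(f):=sup_x sup ∑_j |f(x,J_j)| < ∞ (suprema over finite families of pairwise nonoverlapping subintervals of [0,2π]), then HV_1(f)+HV_2(f)+HV_{1,2}(f) < ∞, i.e. PBV ⊆ HBV. -/
open Real Filter Topology MeasureTheory
open scoped ENNReal NNReal BigOperators

noncomputable section

private lemma sum_inv_sq_le' (m : ℕ) :
    ∑ j ∈ Finset.range (m+1), (1:ℝ)/((j:ℝ)+1)^2 ≤ 2 - 1/((m:ℝ)+1) := by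
  induction m with
  | zero => norm_num
  | succ m ih =>
    rw [Finset.sum_range_succ]
    have h1 : (0:ℝ) < (m:ℝ) + 1 := by positivity
    have h2 : (0:ℝ) < (m:ℝ) + 2 := by positivity
    have key : (1:ℝ)/(((m+1:ℕ):ℝ)+1)^2 ≤ 1/((m:ℝ)+1) - 1/((m:ℝ)+2) := by
      push_cast
      rw [div_sub_div _ _ (ne_of_gt h1) (ne_of_gt h2)]
      rw [div_le_div_iff₀ (by positivity) (by positivity)]
      nlinarith
    have : (((m+1:ℕ):ℝ)+1) = (m:ℝ)+2 := by push_cast; ring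
    rw [this] at key ⊢
    linarith

private lemma sum_inv_sq_le (m : ℕ) :
    ∑ j ∈ Finset.range m, (1:ℝ)/((j:ℝ)+1)^2 ≤ 2 := by
  cases m with
  | zero => norm_num
  | succ m =>
    have := sum_inv_sq_le' m
    have h1 : (0:ℝ) < 1/((m:ℝ)+1) := by positivity
    linarith

private lemma fin_sum_c_le (m : ℕ) :
    ∑ j : Fin m, ENNReal.ofReal ((1:ℝ)/((j.1:ℝ)+1)^2) ≤ 2 := by
  rw [Fin.sum_univ_eq_sum_range (fun k => ENNReal.ofReal ((1:ℝ)/((k:ℝ)+1)^2))]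
  rw [← ENNReal.ofReal_sum_of_nonneg (fun i _ => by positivity)]
  calc ENNReal.ofReal (∑ j ∈ Finset.range m, (1:ℝ)/((j:ℝ)+1)^2)
      ≤ ENNReal.ofReal 2 := ENNReal.ofReal_le_ofReal (sum_inv_sq_le m)
    _ = 2 := by norm_num

private lemma le_Var1' (f : ℝ → ℝ → ℝ) (y : ℝ) (n : ℕ)
    (I : {I : Fin n → ℝ × ℝ // Nonoverlapping I}) :
    ∑ i : Fin n, ENNReal.ofReal |incr1 f (I.1 i) y| ≤ Var1 oneSeq f := by
  have h : ∑ i : Fin n, ENNReal.ofReal |incr1 f (I.1 i) y|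
      = ∑ i : Fin n, ENNReal.ofReal (|incr1 f (I.1 i) y| / oneSeq (i.1+1)) := by
    simp [oneSeq]
  rw [h]
  exact le_iSup_of_le y (le_iSup_of_le n (le_iSup_of_le I le_rfl))

private lemma le_Var2' (f : ℝ → ℝ → ℝ) (x : ℝ) (m : ℕ)
    (J : {J : Fin m → ℝ × ℝ // Nonoverlapping J}) :
    ∑ j : Fin m, ENNReal.ofReal |incr2 f x (J.1 j)| ≤ Var2 oneSeq f := by
  have h : ∑ j : Fin m, ENNReal.ofReal |incr2 f x (J.1 j)|
      = ∑ j : Fin m, ENNReal.ofReal (|incr2 f x (J.1 j)| / oneSeq (j.1+1)) := by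
    simp [oneSeq]
  rw [h]
  exact le_iSup_of_le x (le_iSup_of_le m (le_iSup_of_le J le_rfl))

private lemma row_bound (f : ℝ → ℝ → ℝ) (n : ℕ)
    (I : {I : Fin n → ℝ × ℝ // Nonoverlapping I}) (J : ℝ × ℝ) :
    ∑ i : Fin n, ENNReal.ofReal |incr12 f (I.1 i) J| ≤ 2 * Var1 oneSeq f := by
  have hterm : ∀ i : Fin n, ENNReal.ofReal |incr12 f (I.1 i) J|
      ≤ ENNReal.ofReal |incr1 f (I.1 i) J.2| + ENNReal.ofReal |incr1 f (I.1 i) J.1| := by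
    intro i
    rw [← ENNReal.ofReal_add (abs_nonneg _) (abs_nonneg _)]
    apply ENNReal.ofReal_le_ofReal
    have : incr12 f (I.1 i) J = incr1 f (I.1 i) J.2 - incr1 f (I.1 i) J.1 := by
      simp [incr12, incr1]; ring
    rw [this]; exact abs_sub _ _
  calc ∑ i : Fin n, ENNReal.ofReal |incr12 f (I.1 i) J|
      ≤ ∑ i : Fin n, (ENNReal.ofReal |incr1 f (I.1 i) J.2|
          + ENNReal.ofReal |incr1 f (I.1 i) J.1|) := Finset.sum_le_sum fun i _ => hterm i
    _ = (∑ i : Fin n, ENNReal.ofReal |incr1 f (I.1 i) J.2|)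
          + ∑ i : Fin n, ENNReal.ofReal |incr1 f (I.1 i) J.1| := Finset.sum_add_distrib
    _ ≤ Var1 oneSeq f + Var1 oneSeq f := add_le_add (le_Var1' f J.2 n I) (le_Var1' f J.1 n I)
    _ = 2 * Var1 oneSeq f := (two_mul _).symm

private lemma col_bound (f : ℝ → ℝ → ℝ) (m : ℕ)
    (J : {J : Fin m → ℝ × ℝ // Nonoverlapping J}) (I : ℝ × ℝ) :
    ∑ j : Fin m, ENNReal.ofReal |incr12 f I (J.1 j)| ≤ 2 * Var2 oneSeq f := by
  have hterm : ∀ j : Fin m, ENNReal.ofReal |incr12 f I (J.1 j)|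
      ≤ ENNReal.ofReal |incr2 f I.2 (J.1 j)| + ENNReal.ofReal |incr2 f I.1 (J.1 j)| := by
    intro j
    rw [← ENNReal.ofReal_add (abs_nonneg _) (abs_nonneg _)]
    apply ENNReal.ofReal_le_ofReal
    have : incr12 f I (J.1 j) = incr2 f I.2 (J.1 j) - incr2 f I.1 (J.1 j) := by
      simp [incr12, incr2]; ring
    rw [this]; exact abs_sub _ _
  calc ∑ j : Fin m, ENNReal.ofReal |incr12 f I (J.1 j)|
      ≤ ∑ j : Fin m, (ENNReal.ofReal |incr2 f I.2 (J.1 j)|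
          + ENNReal.ofReal |incr2 f I.1 (J.1 j)|) := Finset.sum_le_sum fun j _ => hterm j
    _ = (∑ j : Fin m, ENNReal.ofReal |incr2 f I.2 (J.1 j)|)
          + ∑ j : Fin m, ENNReal.ofReal |incr2 f I.1 (J.1 j)| := Finset.sum_add_distrib
    _ ≤ Var2 oneSeq f + Var2 oneSeq f := add_le_add (le_Var2' f I.2 m J) (le_Var2' f I.1 m J)
    _ = 2 * Var2 oneSeq f := (two_mul _).symm

/-- every function of bounded partial variation in the sense of Hardy
has bounded harmonic variation: `PBV ⊆ HBV`. -/
theorem statement2 (f : ℝ → ℝ → ℝ) (hper : Periodic2 f)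
    (hV1 : Var1 oneSeq f < ⊤) (hV2 : Var2 oneSeq f < ⊤) :
    Var1 harmonicSeq f + Var2 harmonicSeq f + Var12 harmonicSeq f < ⊤ := by
  have hc : ∀ (p q : ℕ) (x : ℝ), q ≤ p →
      ENNReal.ofReal (x / (harmonicSeq (p+1) * harmonicSeq (q+1)))
        ≤ ENNReal.ofReal |x| * ENNReal.ofReal ((1:ℝ)/((q:ℝ)+1)^2) := by
    intro p q x hqp
    rw [← ENNReal.ofReal_mul (abs_nonneg _)]
    apply ENNReal.ofReal_le_ofReal
    have hq1 : (0:ℝ) < (q:ℝ) + 1 := by positivity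
    have hpq : ((q:ℝ)+1) ≤ (p:ℝ)+1 := by exact_mod_cast Nat.succ_le_succ hqp
    calc x / (harmonicSeq (p+1) * harmonicSeq (q+1))
        ≤ |x| / (((q:ℝ)+1)^2) := by
          simp only [harmonicSeq]
          push_cast
          rw [div_le_div_iff₀ (by positivity) (by positivity)]
          calc x * ((q:ℝ)+1)^2 ≤ |x| * ((q:ℝ)+1)^2 := by
                apply mul_le_mul_of_nonneg_right (le_abs_self x) (by positivity)
            _ ≤ |x| * (((p:ℝ)+1) * ((q:ℝ)+1)) := by
                apply mul_le_mul_of_nonneg_left _ (abs_nonneg x)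
                nlinarith
      _ = |x| * ((1:ℝ)/((q:ℝ)+1)^2) := by rw [mul_one_div]
  have hV1' : Var1 harmonicSeq f ≤ Var1 oneSeq f := by
    refine iSup_mono fun y => iSup_mono fun n => iSup_mono fun I =>
      Finset.sum_le_sum fun i _ => ?_
    apply ENNReal.ofReal_le_ofReal
    simp only [harmonicSeq, oneSeq, div_one]
    apply div_le_self (abs_nonneg _)
    exact_mod_cast Nat.succ_le_succ (Nat.zero_le _)
  have hV2' : Var2 harmonicSeq f ≤ Var2 oneSeq f := by
    refine iSup_mono fun x => iSup_mono fun m => iSup_mono fun J =>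
      Finset.sum_le_sum fun j _ => ?_
    apply ENNReal.ofReal_le_ofReal
    simp only [harmonicSeq, oneSeq, div_one]
    apply div_le_self (abs_nonneg _)
    exact_mod_cast Nat.succ_le_succ (Nat.zero_le _)
  have hV12 : Var12 harmonicSeq f ≤ 2 * Var1 oneSeq f * 2 + 2 * Var2 oneSeq f * 2 := by
    refine iSup_le fun n => iSup_le fun m => iSup_le fun I => iSup_le fun J => ?_
    set A : Fin n → Fin m → ℝ≥0∞ := fun i j => ENNReal.ofReal |incr12 f (I.1 i) (J.1 j)|
      with hA
    set c : ℕ → ℝ≥0∞ := fun k => ENNReal.ofReal ((1:ℝ)/((k:ℝ)+1)^2) with hcdef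
    have key : ∀ (i : Fin n) (j : Fin m),
        ENNReal.ofReal (|incr12 f (I.1 i) (J.1 j)|
            / (harmonicSeq (i.1+1) * harmonicSeq (j.1+1)))
        ≤ (if j.1 ≤ i.1 then A i j * c j.1 else 0)
          + (if j.1 ≤ i.1 then 0 else A i j * c i.1) := by
      intro i j
      by_cases h : j.1 ≤ i.1
      · simp only [h, if_true, add_zero]
        have := hc i.1 j.1 |incr12 f (I.1 i) (J.1 j)| h
        simpa [hA, hcdef, abs_abs] using this
      · simp only [h, if_false, zero_add]
        have h' : i.1 ≤ j.1 := le_of_not_ge h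
        have : ENNReal.ofReal (|incr12 f (I.1 i) (J.1 j)|
            / (harmonicSeq (j.1+1) * harmonicSeq (i.1+1)))
            ≤ A i j * c i.1 := by
          have := hc j.1 i.1 |incr12 f (I.1 i) (J.1 j)| h'
          simpa [hA, hcdef, abs_abs] using this
        rwa [mul_comm (harmonicSeq (j.1+1))] at this
    calc ∑ i : Fin n, ∑ j : Fin m,
          ENNReal.ofReal (|incr12 f (I.1 i) (J.1 j)|
            / (harmonicSeq (i.1+1) * harmonicSeq (j.1+1)))
        ≤ ∑ i : Fin n, ∑ j : Fin m,
            ((if j.1 ≤ i.1 then A i j * c j.1 else 0)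
              + (if j.1 ≤ i.1 then 0 else A i j * c i.1)) := by
          exact Finset.sum_le_sum fun i _ => Finset.sum_le_sum fun j _ => key i j
      _ = (∑ i : Fin n, ∑ j : Fin m, (if j.1 ≤ i.1 then A i j * c j.1 else 0))
            + ∑ i : Fin n, ∑ j : Fin m, (if j.1 ≤ i.1 then 0 else A i j * c i.1) := by
          rw [← Finset.sum_add_distrib]
          exact Finset.sum_congr rfl fun i _ => Finset.sum_add_distrib
      _ ≤ 2 * Var1 oneSeq f * 2 + 2 * Var2 oneSeq f * 2 := by
          apply add_le_add
          · calc ∑ i : Fin n, ∑ j : Fin m, (if j.1 ≤ i.1 then A i j * c j.1 else 0)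
                = ∑ j : Fin m, ∑ i : Fin n, (if j.1 ≤ i.1 then A i j * c j.1 else 0) :=
                  Finset.sum_comm
              _ ≤ ∑ j : Fin m, ∑ i : Fin n, A i j * c j.1 := by
                  refine Finset.sum_le_sum fun j _ => Finset.sum_le_sum fun i _ => ?_
                  split
                  · exact le_rfl
                  · exact zero_le
              _ = ∑ j : Fin m, (∑ i : Fin n, A i j) * c j.1 := by
                  exact Finset.sum_congr rfl fun j _ => (Finset.sum_mul _ _ _).symm
              _ ≤ ∑ j : Fin m, (2 * Var1 oneSeq f) * c j.1 := by
                  refine Finset.sum_le_sum fun j _ => ?_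
                  exact mul_le_mul_left (row_bound f n I (J.1 j)) _
              _ = (2 * Var1 oneSeq f) * ∑ j : Fin m, c j.1 := by
                  rw [← Finset.mul_sum]
              _ ≤ 2 * Var1 oneSeq f * 2 :=
                  mul_le_mul_right (fin_sum_c_le m) _
          · calc ∑ i : Fin n, ∑ j : Fin m, (if j.1 ≤ i.1 then 0 else A i j * c i.1)
                ≤ ∑ i : Fin n, ∑ j : Fin m, A i j * c i.1 := by
                  refine Finset.sum_le_sum fun i _ => Finset.sum_le_sum fun j _ => ?_
                  split
                  · exact zero_le
                  · exact le_rfl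
              _ = ∑ i : Fin n, (∑ j : Fin m, A i j) * c i.1 := by
                  exact Finset.sum_congr rfl fun i _ => (Finset.sum_mul _ _ _).symm
              _ ≤ ∑ i : Fin n, (2 * Var2 oneSeq f) * c i.1 := by
                  refine Finset.sum_le_sum fun i _ => ?_
                  exact mul_le_mul_left (col_bound f m J (I.1 i)) _
              _ = (2 * Var2 oneSeq f) * ∑ i : Fin n, c i.1 := by
                  rw [← Finset.mul_sum]
              _ ≤ 2 * Var2 oneSeq f * 2 :=
                  mul_le_mul_right (fin_sum_c_le n) _
  have fin1 : Var1 harmonicSeq f < ⊤ := lt_of_le_of_lt hV1' hV1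
  have fin2 : Var2 harmonicSeq f < ⊤ := lt_of_le_of_lt hV2' hV2
  have fin12 : Var12 harmonicSeq f < ⊤ := by
    refine lt_of_le_of_lt hV12 ?_
    rw [lt_top_iff_ne_top]
    have h2 : (2 : ℝ≥0∞) ≠ ⊤ := by norm_num
    exact ENNReal.add_ne_top.mpr
      ⟨ENNReal.mul_ne_top (ENNReal.mul_ne_top h2 hV1.ne) h2,
       ENNReal.mul_ne_top (ENNReal.mul_ne_top h2 hV2.ne) h2⟩
  exact ENNReal.add_lt_top.mpr ⟨ENNReal.add_lt_top.mpr ⟨fin1, fin2⟩, fin12⟩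
end
end

section
/- PHBV ⊄ HBV: there exists a function f on ℝ², 2π-periodic in each variable, with bounded partial harmonic variation, HV_1(f) + HV_2(f) < ∞, but with infinite mixed harmonic variation, HV_{1,2}(f) = ∞. -/
open Real Filter Topology MeasureTheory
open scoped ENNReal NNReal BigOperators

noncomputable section

namespace S3

open scoped Classical

/-! ### The grid points -/

noncomputable def pt (k i : ℕ) : ℝ := π / 2 ^ (2 * Nat.pair k i + 1)

lemma pt_pos (k i : ℕ) : 0 < pt k i := by
  have := Real.pi_pos
  rw [pt]; positivity

lemma pt_le (k i : ℕ) : pt k i ≤ π / 2 := by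
  rw [pt]
  have h2 : (2:ℝ) ≤ 2 ^ (2 * Nat.pair k i + 1) := by
    calc (2:ℝ) = 2 ^ 1 := (pow_one 2).symm
    _ ≤ 2 ^ (2 * Nat.pair k i + 1) := by
        apply pow_le_pow_right₀ one_le_two; omega
  apply div_le_div_of_nonneg_left Real.pi_pos.le (by norm_num) h2

lemma pi_div_pow_inj {a b : ℕ} (h : π / (2:ℝ) ^ a = π / 2 ^ b) : a = b := by
  have ha : (0:ℝ) < 2 ^ a := by positivity
  have hb : (0:ℝ) < 2 ^ b := by positivity
  rw [div_eq_div_iff ha.ne' hb.ne'] at h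
  have h2 : ((2:ℝ)) ^ b = 2 ^ a := mul_left_cancel₀ (ne_of_gt Real.pi_pos) h
  have h3 : ((2 ^ b : ℕ) : ℝ) = ((2 ^ a : ℕ) : ℝ) := by push_cast; exact h2
  exact (Nat.pow_right_injective (le_refl 2) (Nat.cast_injective h3)).symm

lemma pt_inj {k i k' i' : ℕ} (h : pt k i = pt k' i') : k = k' ∧ i = i' := by
  rw [pt, pt] at h
  have := pi_div_pow_inj h
  have hp : Nat.pair k i = Nat.pair k' i' := by omega
  exact Nat.pair_eq_pair.mp hp

/-! ### Congruence mod 2π -/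

def eqMod (x p : ℝ) : Prop := ∃ n : ℤ, x = p + 2 * π * n

lemma eqMod_self (p : ℝ) : eqMod p p := ⟨0, by simp⟩

lemma eqMod_eq {x p : ℝ} (h : eqMod x p) (hd : |x - p| < 2 * π) : x = p := by
  obtain ⟨n, rfl⟩ := h
  have h2π : (0:ℝ) < 2 * π := by have := Real.pi_pos; linarith
  rw [add_sub_cancel_left, abs_mul, abs_of_pos h2π] at hd
  have hn : |(n:ℝ)| < 1 := by
    nlinarith [abs_nonneg ((n:ℝ))]
  have hn1 : -1 < (n:ℝ) ∧ (n:ℝ) < 1 := abs_lt.mp hn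
  have hl : (-1:ℤ) < n := by exact_mod_cast hn1.1
  have hr : n < (1:ℤ) := by exact_mod_cast hn1.2
  have : n = 0 := by omega
  simp [this]

lemma eqMod_add {x p : ℝ} : eqMod (x + 2 * π) p ↔ eqMod x p := by
  constructor
  · rintro ⟨n, h⟩; exact ⟨n - 1, by push_cast; linarith⟩
  · rintro ⟨n, h⟩; exact ⟨n + 1, by push_cast; linarith⟩

/-! ### The sets `X_k` and the index function -/

def inX (k : ℕ) (x : ℝ) : Prop := 1 ≤ k ∧ ∃ i, i < 2 ^ k ∧ eqMod x (pt k i)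

lemma abs_pt_sub_lt (k i k' i' : ℕ) : |pt k i - pt k' i'| < 2 * π := by
  have h1 := pt_pos k i; have h2 := pt_le k i
  have h3 := pt_pos k' i'; have h4 := pt_le k' i'
  have hπ := Real.pi_pos
  rw [abs_lt]; constructor <;> nlinarith

lemma inX_unique {k k' : ℕ} {x : ℝ} (h : inX k x) (h' : inX k' x) : k = k' := by
  obtain ⟨-, i, hi, n, rfl⟩ := h
  obtain ⟨-, i', hi', n', he⟩ := h'
  have hm : eqMod (pt k i) (pt k' i') := ⟨n' - n, by push_cast; linarith⟩
  exact (pt_inj (eqMod_eq hm (abs_pt_sub_lt _ _ _ _))).1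

noncomputable def idx (x : ℝ) : ℕ := if h : ∃ k, inX k x then h.choose else 0

lemma idx_eq_of_inX {k : ℕ} {x : ℝ} (h : inX k x) : idx x = k := by
  have hex : ∃ k, inX k x := ⟨k, h⟩
  rw [idx, dif_pos hex]
  exact inX_unique hex.choose_spec h

lemma inX_idx {x : ℝ} (h : idx x ≠ 0) : inX (idx x) x := by
  by_cases hc : ∃ k, inX k x
  · rw [idx, dif_pos hc]; exact hc.choose_spec
  · rw [idx, dif_neg hc] at h; exact absurd rfl h

lemma idx_add (x : ℝ) : idx (x + 2 * π) = idx x := by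
  by_cases h : ∃ k, inX k x
  · obtain ⟨k, hk⟩ := h
    have hk' : inX k (x + 2 * π) := ⟨hk.1, by
      obtain ⟨i, hi, hm⟩ := hk.2; exact ⟨i, hi, eqMod_add.mpr hm⟩⟩
    rw [idx_eq_of_inX hk, idx_eq_of_inX hk']
  · have h' : ¬ ∃ k, inX k (x + 2 * π) := by
      rintro ⟨k, hk1, i, hi, hm⟩
      exact h ⟨k, hk1, i, hi, eqMod_add.mp hm⟩
    rw [idx, dif_neg h', idx, dif_neg h]

lemma idx_pt {k i : ℕ} (hk : 1 ≤ k) (hi : i < 2 ^ k) : idx (pt k i) = k :=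
  idx_eq_of_inX ⟨hk, i, hi, eqMod_self _⟩

lemma half_pt (k i : ℕ) : pt k i / 2 = π / 2 ^ (2 * Nat.pair k i + 2) := by
  rw [pt, div_div, ← pow_succ]

lemma idx_half (k i : ℕ) : idx (pt k i / 2) = 0 := by
  by_contra h
  obtain ⟨-, i', hi', hm⟩ := inX_idx h
  have hx : pt k i / 2 = pt (idx (pt k i / 2)) i' := by
    apply eqMod_eq hm
    have h1 := pt_pos k i; have h2 := pt_le k i
    have h3 := pt_pos (idx (pt k i / 2)) i'
    have h4 := pt_le (idx (pt k i / 2)) i'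
    have hπ := Real.pi_pos
    rw [abs_lt]; constructor <;> nlinarith
  rw [half_pt, pt] at hx
  have := pi_div_pow_inj hx
  omega

lemma inX_mem {k : ℕ} {x : ℝ} (h : inX k x) (h0 : 0 ≤ x) (h2 : x ≤ 2 * π) :
    ∃ i, i < 2 ^ k ∧ x = pt k i := by
  obtain ⟨-, i, hi, hm⟩ := h
  refine ⟨i, hi, eqMod_eq hm ?_⟩
  have h1 := pt_pos k i; have h3 := pt_le k i
  have hπ := Real.pi_pos
  rw [abs_lt]; constructor <;> nlinarith

/-! ### The function `F` -/

noncomputable def F (x y : ℝ) : ℝ := if idx x = idx y then ((idx x : ℝ))⁻¹ else 0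

lemma F_symm (x y : ℝ) : F x y = F y x := by
  unfold F
  by_cases h : idx x = idx y
  · rw [if_pos h, if_pos h.symm, h]
  · rw [if_neg h, if_neg (Ne.symm h)]

lemma F_periodic : Periodic2 F := by
  intro x y
  constructor
  · simp only [F, idx_add]
  · simp only [F, idx_add]

lemma F_nonneg (x y : ℝ) : 0 ≤ F x y := by
  unfold F; split
  · positivity
  · exact le_refl 0

lemma F_le (x y : ℝ) : F x y ≤ ((idx y : ℝ))⁻¹ := by
  unfold F; split
  · rename_i h; rw [h]
  · positivity

lemma F_row0 {y : ℝ} (h : idx y = 0) (x : ℝ) : F x y = 0 := by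
  unfold F; split
  · rename_i hxy; rw [hxy, h]; simp
  · rfl

lemma F_ne_imp {x y : ℝ} (h : F x y ≠ 0) : idx x = idx y ∧ idx x ≠ 0 := by
  unfold F at h
  split at h
  · rename_i hc
    refine ⟨hc, ?_⟩
    intro h0
    rw [h0] at h; simp at h
  · exact absurd rfl h

/-! ### Harmonic sums -/

noncomputable def H (n : ℕ) : ℝ := ∑ i ∈ Finset.range n, ((i:ℝ) + 1)⁻¹

lemma H_nonneg (n : ℕ) : 0 ≤ H n := by
  rw [H]; positivity

lemma H_mono : Monotone H := by
  apply monotone_nat_of_le_succ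
  intro n
  rw [H, H, Finset.sum_range_succ]
  have : (0:ℝ) ≤ ((n:ℝ) + 1)⁻¹ := by positivity
  linarith

lemma H_split (n : ℕ) : H (2 ^ (n + 1)) =
    H (2 ^ n) + ∑ i ∈ Finset.Ico ((2:ℕ) ^ n) (2 ^ (n + 1)), ((i:ℝ) + 1)⁻¹ := by
  rw [H, H, Finset.range_eq_Ico, Finset.range_eq_Ico]
  rw [← Finset.sum_Ico_consecutive _ (Nat.zero_le _)
    (Nat.pow_le_pow_right (by norm_num) (Nat.le_succ n))]

lemma card_Ico_pow (n : ℕ) : (Finset.Ico ((2:ℕ) ^ n) (2 ^ (n + 1))).card = 2 ^ n := by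
  rw [Nat.card_Ico]
  have : 2 ^ (n + 1) = 2 ^ n * 2 := pow_succ 2 n
  omega

lemma H_le (n : ℕ) : H (2 ^ n) ≤ (n:ℝ) + 1 := by
  induction n with
  | zero => simp [H]
  | succ n ih =>
    have hb : ∑ i ∈ Finset.Ico ((2:ℕ) ^ n) (2 ^ (n + 1)), ((i:ℝ) + 1)⁻¹ ≤ 1 := by
      have hle : ∀ i ∈ Finset.Ico ((2:ℕ) ^ n) (2 ^ (n + 1)), ((i:ℝ) + 1)⁻¹ ≤ (((2:ℕ) ^ n : ℕ):ℝ)⁻¹ := by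
        intro i hi
        rw [Finset.mem_Ico] at hi
        have h1 : (((2:ℕ) ^ n : ℕ):ℝ) ≤ (i:ℝ) + 1 := by
          have : ((2:ℕ) ^ n : ℕ) ≤ i := hi.1
          have := (Nat.cast_le (α := ℝ)).mpr this
          linarith
        apply inv_anti₀ (by positivity) h1
      calc ∑ i ∈ Finset.Ico ((2:ℕ) ^ n) (2 ^ (n + 1)), ((i:ℝ) + 1)⁻¹
          ≤ (Finset.Ico ((2:ℕ) ^ n) (2 ^ (n + 1))).card • (((2:ℕ) ^ n : ℕ):ℝ)⁻¹ :=
            Finset.sum_le_card_nsmul _ _ _ hle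
        _ = ((2:ℝ) ^ n) * ((2:ℝ) ^ n)⁻¹ := by
            rw [card_Ico_pow, nsmul_eq_mul]; push_cast; ring
        _ = 1 := mul_inv_cancel₀ (by positivity)
    have := H_split n
    push_cast
    linarith

lemma H_ge (n : ℕ) : (n:ℝ) / 2 + 1 ≤ H (2 ^ n) := by
  induction n with
  | zero => simp [H]
  | succ n ih =>
    have hb : (1:ℝ) / 2 ≤ ∑ i ∈ Finset.Ico ((2:ℕ) ^ n) (2 ^ (n + 1)), ((i:ℝ) + 1)⁻¹ := by
      have hle : ∀ i ∈ Finset.Ico ((2:ℕ) ^ n) (2 ^ (n + 1)),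
          (((2:ℕ) ^ (n + 1) : ℕ):ℝ)⁻¹ ≤ ((i:ℝ) + 1)⁻¹ := by
        intro i hi
        rw [Finset.mem_Ico] at hi
        have h1 : (i:ℝ) + 1 ≤ (((2:ℕ) ^ (n + 1) : ℕ):ℝ) := by
          have : i + 1 ≤ (2:ℕ) ^ (n + 1) := hi.2
          have := (Nat.cast_le (α := ℝ)).mpr this
          push_cast at this ⊢
          linarith
        apply inv_anti₀ (by positivity) h1
      calc (1:ℝ) / 2 = ((2:ℝ) ^ n) * ((2:ℝ) ^ (n + 1))⁻¹ := by
            rw [pow_succ]; field_simp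
        _ = (Finset.Ico ((2:ℕ) ^ n) (2 ^ (n + 1))).card • (((2:ℕ) ^ (n + 1) : ℕ):ℝ)⁻¹ := by
            rw [card_Ico_pow, nsmul_eq_mul]; push_cast; ring
        _ ≤ ∑ i ∈ Finset.Ico ((2:ℕ) ^ n) (2 ^ (n + 1)), ((i:ℝ) + 1)⁻¹ :=
            Finset.card_nsmul_le_sum _ _ _ hle
    have := H_split n
    push_cast
    linarith

lemma sum_inv_le : ∀ (n : ℕ) (s : Finset ℕ), s.card = n →
    ∑ i ∈ s, ((i:ℝ) + 1)⁻¹ ≤ H n := by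
  intro n
  induction n with
  | zero =>
    intro s hs
    rw [Finset.card_eq_zero.mp hs]
    simp [H]
  | succ n ih =>
    intro s hs
    have hne : s.Nonempty := Finset.card_pos.mp (by omega)
    set t := s.max' hne with ht
    have htm : t ∈ s := s.max'_mem hne
    have hcard : (s.erase t).card = n := by
      rw [Finset.card_erase_of_mem htm, hs]
      omega
    have htn : n ≤ t := by
      have hsub : s.erase t ⊆ Finset.range t := by
        intro x hx
        exact Finset.mem_range.mpr (lt_of_le_of_ne
          (s.le_max' x (Finset.mem_of_mem_erase hx)) (Finset.ne_of_mem_erase hx))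
      have := Finset.card_le_card hsub
      rw [hcard, Finset.card_range] at this
      exact this
    have hrec := ih (s.erase t) hcard
    have hsum : ∑ i ∈ s, ((i:ℝ) + 1)⁻¹
        = ∑ i ∈ s.erase t, ((i:ℝ) + 1)⁻¹ + ((t:ℝ) + 1)⁻¹ :=
      (Finset.sum_erase_add _ _ htm).symm
    have hle : ((t:ℝ) + 1)⁻¹ ≤ ((n:ℝ) + 1)⁻¹ := by
      apply inv_anti₀ (by positivity)
      have := (Nat.cast_le (α := ℝ)).mpr htn
      linarith
    rw [hsum]
    have : H (n + 1) = H n + ((n:ℝ) + 1)⁻¹ := by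
      rw [H, H, Finset.sum_range_succ]
    rw [this]
    linarith

lemma sum_inv_le' (s : Finset ℕ) : ∑ i ∈ s, ((i:ℝ) + 1)⁻¹ ≤ H s.card :=
  sum_inv_le s.card s rfl

end S3

namespace S3

open scoped Classical

lemma harmonicSeq_eq (m : ℕ) : harmonicSeq (m + 1) = (m:ℝ) + 1 := by
  simp [harmonicSeq]

lemma row_bound (y : ℝ) (n : ℕ) (I : Fin n → ℝ × ℝ) (hI : Nonoverlapping I) :
    ∑ i : Fin n, |incr1 F (I i) y| / harmonicSeq (i.1 + 1) ≤ 3 := by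
  by_cases h0 : idx y = 0
  · have hz : ∀ i ∈ (Finset.univ : Finset (Fin n)),
        |incr1 F (I i) y| / harmonicSeq (i.1 + 1) = 0 := by
      intro i _
      rw [incr1, F_row0 h0, F_row0 h0]
      simp
    rw [Finset.sum_congr rfl hz]
    simp
  · set k := idx y with hk
    have hk1 : 1 ≤ k := Nat.one_le_iff_ne_zero.mpr h0
    have hk1R : (1:ℝ) ≤ (k:ℝ) := by exact_mod_cast hk1
    set T : Finset (Fin n) := Finset.univ.filter (fun i => incr1 F (I i) y ≠ 0) with hT
    have hsum : ∑ i : Fin n, |incr1 F (I i) y| / harmonicSeq (i.1 + 1)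
        = ∑ i ∈ T, |incr1 F (I i) y| / harmonicSeq (i.1 + 1) := by
      symm
      apply Finset.sum_filter_of_ne
      intro i _ hne h'
      apply hne
      rw [h']
      simp
    have hterm : ∀ i ∈ T, |incr1 F (I i) y| / harmonicSeq (i.1 + 1)
        ≤ (k:ℝ)⁻¹ / ((i.1:ℝ) + 1) := by
      intro i _
      rw [harmonicSeq_eq]
      have h1 : |incr1 F (I i) y| ≤ (k:ℝ)⁻¹ := by
        rw [incr1, abs_le]
        have n1 := F_nonneg (I i).2 y
        have n2 := F_nonneg (I i).1 y
        have l1 := F_le (I i).2 y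
        have l2 := F_le (I i).1 y
        rw [← hk] at l1 l2
        constructor <;> linarith
      gcongr
    -- cardinality bound
    have hcard : T.card ≤ 2 ^ (k + 1) := by
      set P : Finset ℝ := (Finset.range (2 ^ k)).image (pt k) with hP
      set ψ : Fin n → ℝ × Bool := fun i =>
        if F (I i).2 y ≠ 0 then ((I i).2, true) else ((I i).1, false) with hψ
      have hmaps : ∀ i ∈ T, ψ i ∈ P ×ˢ (Finset.univ : Finset Bool) := by
        intro i hi
        rw [hT, Finset.mem_filter] at hi
        have hinc := hi.2
        obtain ⟨ha0, hab, hb2⟩ := hI.1 i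
        have hmem : ∀ x : ℝ, 0 ≤ x → x ≤ 2 * π → F x y ≠ 0 → x ∈ P := by
          intro x hx0 hx2 hFx
          obtain ⟨hxy, hx⟩ := F_ne_imp hFx
          have hin : inX k x := by
            have h' := inX_idx hx
            rwa [hxy, ← hk] at h'
          obtain ⟨j, hj, hxj⟩ := inX_mem hin hx0 hx2
          rw [hP]
          exact Finset.mem_image.mpr ⟨j, Finset.mem_range.mpr hj, hxj.symm⟩
        simp only [hψ]
        by_cases hb : F (I i).2 y ≠ 0
        · rw [if_pos hb, Finset.mem_product]
          exact ⟨hmem _ (by linarith) hb2 hb, Finset.mem_univ _⟩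
        · rw [if_neg hb, Finset.mem_product]
          push_neg at hb
          have ha : F (I i).1 y ≠ 0 := by
            intro h'
            apply hinc
            rw [incr1, hb, h']
            ring
          exact ⟨hmem _ ha0 (by linarith) ha, Finset.mem_univ _⟩
      have hinj : (T : Set (Fin n)).InjOn ψ := by
        intro i _ j _ hij
        by_contra hne
        obtain ⟨hia, hiab, hib⟩ := hI.1 i
        obtain ⟨hja, hjab, hjb⟩ := hI.1 j
        simp only [hψ] at hij
        by_cases h1 : F (I i).2 y ≠ 0 <;> by_cases h2 : F (I j).2 y ≠ 0
        · rw [if_pos h1, if_pos h2] at hij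
          have he : (I i).2 = (I j).2 := (Prod.mk.injEq _ _ _ _).mp hij |>.1
          rcases hI.2 i j hne with hc | hc <;> linarith
        · rw [if_pos h1, if_neg h2] at hij
          exact Bool.noConfusion ((Prod.mk.injEq _ _ _ _).mp hij |>.2)
        · rw [if_neg h1, if_pos h2] at hij
          exact Bool.noConfusion ((Prod.mk.injEq _ _ _ _).mp hij |>.2)
        · rw [if_neg h1, if_neg h2] at hij
          have he : (I i).1 = (I j).1 := (Prod.mk.injEq _ _ _ _).mp hij |>.1
          rcases hI.2 i j hne with hc | hc <;> linarith
      have := Finset.card_le_card_of_injOn ψ hmaps hinj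
      have hPc : P.card ≤ 2 ^ k := by
        rw [hP]
        exact le_trans Finset.card_image_le (by simp)
      rw [Finset.card_product, Finset.card_univ, Fintype.card_bool] at this
      calc T.card ≤ P.card * 2 := this
        _ ≤ 2 ^ k * 2 := by omega
        _ = 2 ^ (k + 1) := (pow_succ 2 k).symm
    calc ∑ i : Fin n, |incr1 F (I i) y| / harmonicSeq (i.1 + 1)
        = ∑ i ∈ T, |incr1 F (I i) y| / harmonicSeq (i.1 + 1) := hsum
      _ ≤ ∑ i ∈ T, (k:ℝ)⁻¹ / ((i.1:ℝ) + 1) := Finset.sum_le_sum hterm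
      _ = (k:ℝ)⁻¹ * ∑ i ∈ T, ((i.1:ℝ) + 1)⁻¹ := by
          rw [Finset.mul_sum]
          apply Finset.sum_congr rfl
          intro i _
          rw [div_eq_mul_inv]
      _ = (k:ℝ)⁻¹ * ∑ j ∈ T.image Fin.val, ((j:ℝ) + 1)⁻¹ := by
          rw [Finset.sum_image (fun a _ b _ h => Fin.val_injective h)]
      _ ≤ (k:ℝ)⁻¹ * H ((T.image Fin.val).card) := by
          have := sum_inv_le' (T.image Fin.val)
          have hknn : (0:ℝ) ≤ (k:ℝ)⁻¹ := by positivity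
          nlinarith [this]
      _ ≤ (k:ℝ)⁻¹ * H (2 ^ (k + 1)) := by
          apply mul_le_mul_of_nonneg_left _ (by positivity)
          apply H_mono
          rw [Finset.card_image_of_injective _ Fin.val_injective]
          exact hcard
      _ ≤ (k:ℝ)⁻¹ * ((k:ℝ) + 2) := by
          apply mul_le_mul_of_nonneg_left _ (by positivity)
          have := H_le (k + 1)
          push_cast at this
          linarith
      _ ≤ 3 := by
          rw [inv_mul_le_iff₀ (by linarith)]
          linarith

lemma Var1_le : Var1 harmonicSeq F ≤ ENNReal.ofReal 3 := by
  rw [Var1]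
  refine iSup_le fun y => iSup_le fun n => iSup_le fun I => ?_
  have hnn : ∀ i ∈ (Finset.univ : Finset (Fin n)),
      0 ≤ |incr1 F (I.1 i) y| / harmonicSeq (i.1 + 1) := by
    intro i _
    apply div_nonneg (abs_nonneg _)
    rw [harmonicSeq_eq]
    positivity
  rw [← ENNReal.ofReal_sum_of_nonneg hnn]
  exact ENNReal.ofReal_le_ofReal (row_bound y n I.1 I.2)

lemma incr2_eq (x : ℝ) (J : ℝ × ℝ) : incr2 F x J = incr1 F J x := by
  rw [incr2, incr1, F_symm x J.2, F_symm x J.1]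

lemma Var2_eq : Var2 harmonicSeq F = Var1 harmonicSeq F := by
  rw [Var1, Var2]
  simp only [incr2_eq]

end S3

namespace S3

open scoped Classical

lemma pow_lemma {a b : ℕ} (h : a < b) : π / (2:ℝ) ^ b ≤ π / 2 ^ a / 2 := by
  rw [div_div, ← pow_succ]
  have h2 : (2:ℝ) ^ (a + 1) ≤ 2 ^ b := by
    apply pow_le_pow_right₀ one_le_two
    omega
  exact div_le_div_of_nonneg_left Real.pi_pos.le (by positivity) h2

lemma blockI_nonoverlapping (k : ℕ) :
    Nonoverlapping (fun i : Fin (2 ^ k) => (pt k i.1 / 2, pt k i.1)) := by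
  constructor
  · intro i
    have h1 := pt_pos k i.1
    have h2 := pt_le k i.1
    have hπ := Real.pi_pos
    exact ⟨by linarith, by linarith, by linarith⟩
  · intro i j hne
    have hpair : Nat.pair k i.1 ≠ Nat.pair k j.1 := by
      intro h
      exact hne (Fin.ext (Nat.pair_eq_pair.mp h).2)
    rcases Nat.lt_or_ge (2 * Nat.pair k i.1 + 1) (2 * Nat.pair k j.1 + 1) with h | h
    · right
      show pt k j.1 ≤ pt k i.1 / 2
      rw [pt, pt]
      exact pow_lemma h
    · left
      show pt k i.1 ≤ pt k j.1 / 2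
      rw [pt, pt]
      exact pow_lemma (by omega)

lemma incr12_val {k : ℕ} (hk : 1 ≤ k) (i j : Fin (2 ^ k)) :
    incr12 F (pt k i.1 / 2, pt k i.1) (pt k j.1 / 2, pt k j.1) = (k:ℝ)⁻¹ := by
  have e1 : F (pt k i.1 / 2) (pt k j.1 / 2) = 0 := by
    rw [F, if_pos (by rw [idx_half, idx_half]), idx_half]
    simp
  have e2 : F (pt k i.1 / 2) (pt k j.1) = 0 := by
    rw [F, if_neg]
    rw [idx_half, idx_pt hk j.isLt]
    omega
  have e3 : F (pt k i.1) (pt k j.1 / 2) = 0 := by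
    rw [F, if_neg]
    rw [idx_half, idx_pt hk i.isLt]
    omega
  have e4 : F (pt k i.1) (pt k j.1) = (k:ℝ)⁻¹ := by
    rw [F, if_pos (by rw [idx_pt hk i.isLt, idx_pt hk j.isLt]), idx_pt hk i.isLt]
  show F (pt k i.1 / 2) (pt k j.1 / 2) - F (pt k i.1 / 2) (pt k j.1)
      - F (pt k i.1) (pt k j.1 / 2) + F (pt k i.1) (pt k j.1) = (k:ℝ)⁻¹
  rw [e1, e2, e3, e4]
  ring

lemma sum_fin_inv (n : ℕ) : ∑ j : Fin n, ((j.1:ℝ) + 1)⁻¹ = H n := by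
  rw [H, ← Fin.sum_univ_eq_sum_range (fun m => ((m:ℝ) + 1)⁻¹)]

lemma Var12_ge {k : ℕ} (hk : 1 ≤ k) :
    ENNReal.ofReal ((k:ℝ)⁻¹ * (H (2 ^ k) * H (2 ^ k))) ≤ Var12 harmonicSeq F := by
  set I : Fin (2 ^ k) → ℝ × ℝ := fun i => (pt k i.1 / 2, pt k i.1) with hIdef
  have hI : Nonoverlapping I := blockI_nonoverlapping k
  have hkpos : (0:ℝ) < (k:ℝ) := by exact_mod_cast hk
  have hterm : ∀ i j : Fin (2 ^ k),
      |incr12 F (I i) (I j)| / (harmonicSeq (i.1 + 1) * harmonicSeq (j.1 + 1))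
      = ((k:ℝ)⁻¹ * ((i.1:ℝ) + 1)⁻¹) * ((j.1:ℝ) + 1)⁻¹ := by
    intro i j
    rw [hIdef]
    simp only
    rw [incr12_val hk i j, abs_of_nonneg (by positivity), harmonicSeq_eq, harmonicSeq_eq,
      div_eq_mul_inv, mul_inv]
    ring
  have hreal : ∑ i : Fin (2 ^ k), ∑ j : Fin (2 ^ k),
      |incr12 F (I i) (I j)| / (harmonicSeq (i.1 + 1) * harmonicSeq (j.1 + 1))
      = (k:ℝ)⁻¹ * (H (2 ^ k) * H (2 ^ k)) := by
    have h1 : ∀ i : Fin (2 ^ k), ∑ j : Fin (2 ^ k),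
        |incr12 F (I i) (I j)| / (harmonicSeq (i.1 + 1) * harmonicSeq (j.1 + 1))
        = ((k:ℝ)⁻¹ * ((i.1:ℝ) + 1)⁻¹) * H (2 ^ k) := by
      intro i
      rw [Finset.sum_congr rfl (fun j _ => hterm i j), ← Finset.mul_sum, sum_fin_inv]
    rw [Finset.sum_congr rfl (fun i _ => h1 i)]
    have : ∑ i : Fin (2 ^ k), ((k:ℝ)⁻¹ * ((i.1:ℝ) + 1)⁻¹) * H (2 ^ k)
        = ((k:ℝ)⁻¹ * ∑ i : Fin (2 ^ k), ((i.1:ℝ) + 1)⁻¹) * H (2 ^ k) := by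
      rw [← Finset.sum_mul, ← Finset.mul_sum]
    rw [this, sum_fin_inv]
    ring
  have hofsum : ∑ i : Fin (2 ^ k), ∑ j : Fin (2 ^ k),
      ENNReal.ofReal (|incr12 F (I i) (I j)| / (harmonicSeq (i.1 + 1) * harmonicSeq (j.1 + 1)))
      = ENNReal.ofReal ((k:ℝ)⁻¹ * (H (2 ^ k) * H (2 ^ k))) := by
    rw [← hreal]
    rw [ENNReal.ofReal_sum_of_nonneg]
    · apply Finset.sum_congr rfl
      intro i _
      rw [ENNReal.ofReal_sum_of_nonneg]
      intro j _
      rw [hterm i j]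
      positivity
    · intro i _
      apply Finset.sum_nonneg
      intro j _
      rw [hterm i j]
      positivity
  rw [Var12, ← hofsum]
  apply le_iSup_of_le (2 ^ k)
  apply le_iSup_of_le (2 ^ k)
  apply le_iSup_of_le ⟨I, hI⟩
  apply le_iSup_of_le ⟨I, hI⟩
  exact le_rfl

lemma Var12_top : Var12 harmonicSeq F = ⊤ := by
  have key : ∀ m : ℕ, (m : ℝ≥0∞) ≤ Var12 harmonicSeq F := by
    intro m
    rcases Nat.eq_zero_or_pos m with rfl | hm
    · simp
    · have h1 := Var12_ge (k := 4 * m) (by omega)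
      refine le_trans ?_ h1
      rw [← ENNReal.ofReal_natCast]
      apply ENNReal.ofReal_le_ofReal
      have hH : ((4 * m : ℕ):ℝ) / 2 + 1 ≤ H (2 ^ (4 * m)) := H_ge (4 * m)
      push_cast at hH
      have hmR : (1:ℝ) ≤ (m:ℝ) := by exact_mod_cast hm
      have hHnn : 2 * (m:ℝ) + 1 ≤ H (2 ^ (4 * m)) := by linarith
      have hc : (0:ℝ) < ((4 * m : ℕ):ℝ) := by push_cast; linarith
      rw [mul_comm, ← div_eq_mul_inv, le_div_iff₀ (by push_cast; linarith)]
      push_cast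
      nlinarith [H_nonneg (2 ^ (4 * m))]
  rw [eq_top_iff, ← ENNReal.iSup_natCast]
  exact iSup_le key

end S3


/-- `PHBV ⊄ HBV`: there is a `2π`-periodic (in each variable) function
with bounded partial harmonic variation but infinite mixed harmonic variation. -/
theorem statement3 :
    ∃ f : ℝ → ℝ → ℝ, Periodic2 f ∧
      Var1 harmonicSeq f + Var2 harmonicSeq f < ⊤ ∧
      Var12 harmonicSeq f = ⊤ := by
  refine ⟨S3.F, S3.F_periodic, ?_, S3.Var12_top⟩
  have h1 := S3.Var1_le
  have h2 : Var2 harmonicSeq S3.F ≤ ENNReal.ofReal 3 := by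
    rw [S3.Var2_eq]; exact S3.Var1_le
  calc Var1 harmonicSeq S3.F + Var2 harmonicSeq S3.F
      ≤ ENNReal.ofReal 3 + ENNReal.ofReal 3 := add_le_add h1 h2
    _ < ⊤ := ENNReal.add_lt_top.mpr ⟨ENNReal.ofReal_lt_top, ENNReal.ofReal_lt_top⟩
end
end

section
/- Let Φ and Ψ be functions on [0,∞) that are conjugate in the sense of Young, i.e. a·b ≤ Φ(a) + Ψ(b) for all a,b ≥ 0, and suppose there exists a nondecreasing sequence Λ = {λ_n} of positive numbers with λ_n → ∞ such that ∑_{n=1}^∞ Ψ(1/λ_n) < ∞ and ∑_{n=1}^∞ λ_n/n² < ∞ (e.g. λ_n = n·γ_n with γ_n nonincreasing and ∑ γ_n/n < ∞). Then every f ∈ PBV_Φ belongs to HBV. -/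
open Real Filter Topology MeasureTheory
open scoped ENNReal NNReal BigOperators

noncomputable section

lemma aux_base (d li lj a b : ℝ) (hd : 0 ≤ d) (hli : 0 < li) (hlj : 0 < lj)
    (ha : 0 < a) (hb : 0 < b) :
    d / (a * b) ≤ 1/2 * ((d / lj) * (li / a^2)) + 1/2 * ((d / li) * (lj / b^2)) := by
  rw [div_le_iff₀ (by positivity : (0:ℝ) < a*b)]
  have h1 : 1/2 * ((d / lj) * (li / a^2)) = d * li / (2 * lj * a^2) := by ring
  have h2 : 1/2 * ((d / li) * (lj / b^2)) = d * lj / (2 * li * b^2) := by ring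
  rw [h1, h2, div_add_div _ _ (by positivity) (by positivity), div_mul_eq_mul_div,
    le_div_iff₀ (by positivity)]
  nlinarith [mul_nonneg (mul_nonneg hd (mul_pos ha hb).le) (sq_nonneg (li*b - lj*a))]

lemma aux_key1 (Λ : ℕ → ℝ) (hΛpos : ∀ n, 0 < Λ (n + 1)) (hΛmono : ∀ n, Λ (n + 1) ≤ Λ (n + 2))
    (hΛsum : Summable (fun n : ℕ => Λ (n + 1) / ((n : ℝ) + 1) ^ 2)) (n : ℕ) :
    Λ (n + 1) ≤ 4 * (∑' k : ℕ, Λ (k + 1) / ((k : ℝ) + 1) ^ 2) * ((n : ℝ) + 1) := by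
  set T := ∑' k : ℕ, Λ (k + 1) / ((k : ℝ) + 1) ^ 2 with hT
  have hmono : Monotone (fun n => Λ (n + 1)) := monotone_nat_of_le_succ (fun n => hΛmono n)
  have hsum : ∑ k ∈ Finset.Icc n (2*n+1), Λ (k+1) / ((k:ℝ)+1)^2 ≤ T :=
    Summable.sum_le_tsum _ (fun k _ => div_nonneg (hΛpos k).le (by positivity)) hΛsum
  have hlb : ∀ k ∈ Finset.Icc n (2*n+1), Λ (n+1) / (2*((n:ℝ)+1))^2 ≤ Λ (k+1)/((k:ℝ)+1)^2 := by
    intro k hk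
    simp only [Finset.mem_Icc] at hk
    have hm : Λ (n+1) ≤ Λ (k+1) := hmono hk.1
    have hk2 : (k:ℝ) ≤ 2*(n:ℝ)+1 := by exact_mod_cast hk.2
    have hd : (0:ℝ) < ((k:ℝ)+1)^2 := by positivity
    apply div_le_div₀ (le_trans (hΛpos n).le hm) hm hd
    nlinarith [Nat.cast_nonneg (α := ℝ) n, Nat.cast_nonneg (α := ℝ) k]
  have hcard : (Finset.Icc n (2*n+1)).card = n + 2 := by
    rw [Nat.card_Icc]; omega
  have hns := Finset.card_nsmul_le_sum (Finset.Icc n (2*n+1)) _ _ hlb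
  rw [hcard, nsmul_eq_mul] at hns
  have h1 : ((n:ℝ)+1) * (Λ (n+1) / (2*((n:ℝ)+1))^2) ≤ T := by
    refine le_trans (le_trans ?_ hns) hsum
    have h3 : (0:ℝ) ≤ Λ (n+1) / (2*((n:ℝ)+1))^2 := div_nonneg (hΛpos n).le (by positivity)
    have h2 : ((n:ℝ)+1) ≤ ((n+2 : ℕ) : ℝ) := by push_cast; linarith
    nlinarith
  have hn1 : (0:ℝ) < (n:ℝ)+1 := by positivity
  rw [div_eq_mul_inv] at h1
  have h4 := mul_le_mul_of_nonneg_right h1 (by positivity : (0:ℝ) ≤ 4*((n:ℝ)+1))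
  calc Λ (n+1) = ((n:ℝ)+1) * (Λ (n+1) * ((2*((n:ℝ)+1))^2)⁻¹) * (4*((n:ℝ)+1)) := by
        field_simp; ring
    _ ≤ T * (4*((n:ℝ)+1)) := h4
    _ = 4 * T * ((n:ℝ)+1) := by ring


/-- if `Φ, Ψ` are Young-conjugate and some nondecreasing positive sequence
`Λ = {λ_n}` with `λ_n → ∞` satisfies `∑ Ψ(1/λ_n) < ∞` and `∑ λ_n/n² < ∞`, then
`PBV_Φ ⊆ HBV`. -/
theorem statement4 (Φ Ψ : ℝ → ℝ) (hΦ0 : Φ 0 = 0)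
    (hΦmono : StrictMonoOn Φ (Set.Ici (0 : ℝ)))
    (hΦcont : ContinuousOn Φ (Set.Ici (0 : ℝ)))
    (hYoung : ∀ a b : ℝ, 0 ≤ a → 0 ≤ b → a * b ≤ Φ a + Ψ b)
    (Λ : ℕ → ℝ) (hΛpos : ∀ n, 0 < Λ (n + 1)) (hΛmono : ∀ n, Λ (n + 1) ≤ Λ (n + 2))
    (hΛtop : Tendsto (fun n : ℕ => Λ (n + 1)) atTop atTop)
    (hΨsum : Summable (fun n : ℕ => Ψ (1 / Λ (n + 1))))
    (hΛsum : Summable (fun n : ℕ => Λ (n + 1) / ((n : ℝ) + 1) ^ 2))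
    (f : ℝ → ℝ → ℝ) (hper : Periodic2 f)
    (hΦV1 : ∃ C : ℝ, ∀ (y : ℝ) (n : ℕ) (I : Fin n → ℝ × ℝ), Nonoverlapping I →
      ∑ i : Fin n, Φ |incr1 f (I i) y| ≤ C)
    (hΦV2 : ∃ C : ℝ, ∀ (x : ℝ) (m : ℕ) (J : Fin m → ℝ × ℝ), Nonoverlapping J →
      ∑ j : Fin m, Φ |incr2 f x (J j)| ≤ C) :
    Var1 harmonicSeq f + Var2 harmonicSeq f + Var12 harmonicSeq f < ⊤ := by
  obtain ⟨C₁, hC₁⟩ := hΦV1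
  obtain ⟨C₂, hC₂⟩ := hΦV2
  set T := ∑' k : ℕ, Λ (k + 1) / ((k : ℝ) + 1) ^ 2 with hTdef
  set S := ∑' k : ℕ, Ψ (1 / Λ (k + 1)) with hSdef
  have hΨnn : ∀ n : ℕ, 0 ≤ Ψ (1 / Λ (n + 1)) := by
    intro n
    have := hYoung 0 (1 / Λ (n+1)) le_rfl (one_div_nonneg.2 (hΛpos n).le)
    simpa [hΦ0] using this
  have hT0 : 0 ≤ T := tsum_nonneg (fun k => div_nonneg (hΛpos k).le (by positivity))
  have hS0 : 0 ≤ S := tsum_nonneg hΨnn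
  have key1 : ∀ n : ℕ, Λ (n + 1) ≤ 4 * T * ((n : ℝ) + 1) :=
    aux_key1 Λ hΛpos hΛmono hΛsum
  have hΨpart : ∀ n : ℕ, ∑ i : Fin n, Ψ (1 / Λ (i.1 + 1)) ≤ S := by
    intro n
    rw [Fin.sum_univ_eq_sum_range (fun k => Ψ (1 / Λ (k + 1))) n]
    exact Summable.sum_le_tsum _ (fun i _ => hΨnn i) hΨsum
  have hTpart : ∀ n : ℕ, ∑ i : Fin n, Λ (i.1 + 1) / ((i.1 : ℝ) + 1) ^ 2 ≤ T := by
    intro n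
    rw [Fin.sum_univ_eq_sum_range (fun k => Λ (k + 1) / ((k : ℝ) + 1) ^ 2) n]
    exact Summable.sum_le_tsum _ (fun i _ => div_nonneg (hΛpos i).le (by positivity)) hΛsum
  have hyoung' : ∀ a : ℝ, 0 ≤ a → ∀ n : ℕ, a / Λ (n + 1) ≤ Φ a + Ψ (1 / Λ (n + 1)) := by
    intro a ha n
    have h := hYoung a (1 / Λ (n+1)) ha (one_div_nonneg.2 (hΛpos n).le)
    calc a / Λ (n+1) = a * (1 / Λ (n+1)) := by rw [mul_one_div]
      _ ≤ _ := h
  have hC₁nn : 0 ≤ C₁ := by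
    have := hC₁ 0 0 (fun i => i.elim0) ⟨fun i => i.elim0, fun i => i.elim0⟩
    simpa using this
  have hC₂nn : 0 ≤ C₂ := by
    have := hC₂ 0 0 (fun i => i.elim0) ⟨fun i => i.elim0, fun i => i.elim0⟩
    simpa using this
  -- one-variable bound
  have honev : ∀ (Cb : ℝ) (n : ℕ) (d : Fin n → ℝ), (∀ i, 0 ≤ d i) →
      (∑ i : Fin n, Φ (d i) ≤ Cb) →
      ∑ i : Fin n, d i / ((i.1 : ℝ) + 1) ≤ 4 * T * (Cb + S) := by
    intro Cb n d hd hsum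
    have step : ∀ i : Fin n, d i / ((i.1:ℝ)+1) ≤ 4*T*(Φ (d i) + Ψ (1 / Λ (i.1+1))) := by
      intro i
      have hfrac : (1:ℝ) / ((i.1:ℝ)+1) ≤ 4*T / Λ (i.1+1) := by
        rw [div_le_div_iff₀ (by positivity) (hΛpos i.1)]
        have := key1 i.1
        linarith
      calc d i / ((i.1:ℝ)+1) = d i * (1 / ((i.1:ℝ)+1)) := by rw [mul_one_div]
        _ ≤ d i * (4*T / Λ (i.1+1)) := mul_le_mul_of_nonneg_left hfrac (hd i)
        _ = 4*T*(d i / Λ (i.1+1)) := by ring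
        _ ≤ 4*T*(Φ (d i) + Ψ (1 / Λ (i.1+1))) :=
            mul_le_mul_of_nonneg_left (hyoung' _ (hd i) _) (by linarith)
    calc ∑ i : Fin n, d i / ((i.1:ℝ)+1)
        ≤ ∑ i : Fin n, 4*T*(Φ (d i) + Ψ (1 / Λ (i.1+1))) := Finset.sum_le_sum (fun i _ => step i)
      _ = 4*T*((∑ i : Fin n, Φ (d i)) + ∑ i : Fin n, Ψ (1 / Λ (i.1+1))) := by
          rw [← Finset.mul_sum, Finset.sum_add_distrib]
      _ ≤ 4*T*(Cb + S) := by
          have := add_le_add hsum (hΨpart n)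
          exact mul_le_mul_of_nonneg_left this (by linarith)
  -- Var1 bound
  have hV1 : Var1 harmonicSeq f ≤ ENNReal.ofReal (4*T*(C₁+S)) := by
    refine iSup_le fun y => iSup_le fun n => iSup_le fun I => ?_
    have hterm : ∀ i ∈ Finset.univ (α := Fin n),
        (0:ℝ) ≤ |incr1 f (I.1 i) y| / harmonicSeq (i.1+1) := by
      intro i _
      apply div_nonneg (abs_nonneg _)
      simp only [harmonicSeq]
      positivity
    rw [← ENNReal.ofReal_sum_of_nonneg hterm]
    apply ENNReal.ofReal_le_ofReal
    have h := honev C₁ n (fun i => |incr1 f (I.1 i) y|) (fun i => abs_nonneg _) (hC₁ y n I.1 I.2)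
    refine le_trans (le_of_eq (Finset.sum_congr rfl fun i _ => ?_)) h
    simp [harmonicSeq, Nat.cast_add, Nat.cast_one]
  have hV2 : Var2 harmonicSeq f ≤ ENNReal.ofReal (4*T*(C₂+S)) := by
    refine iSup_le fun x => iSup_le fun m => iSup_le fun J => ?_
    have hterm : ∀ j ∈ Finset.univ (α := Fin m),
        (0:ℝ) ≤ |incr2 f x (J.1 j)| / harmonicSeq (j.1+1) := by
      intro j _
      apply div_nonneg (abs_nonneg _)
      simp only [harmonicSeq]
      positivity
    rw [← ENNReal.ofReal_sum_of_nonneg hterm]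
    apply ENNReal.ofReal_le_ofReal
    have h := honev C₂ m (fun j => |incr2 f x (J.1 j)|) (fun j => abs_nonneg _) (hC₂ x m J.1 J.2)
    refine le_trans (le_of_eq (Finset.sum_congr rfl fun j _ => ?_)) h
    simp [harmonicSeq, Nat.cast_add, Nat.cast_one]
  -- row and column bounds for mixed differences
  have hrow : ∀ (n m : ℕ) (I : Fin n → ℝ × ℝ) (J : Fin m → ℝ × ℝ), Nonoverlapping I →
      ∀ j : Fin m, ∑ i : Fin n, |incr12 f (I i) (J j)| / Λ (i.1+1) ≤ 2*C₁ + 2*S := by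
    intro n m I J hI j
    have hstep : ∀ i : Fin n, |incr12 f (I i) (J j)| / Λ (i.1+1) ≤
        (Φ |incr1 f (I i) ((J j).1)| + Ψ (1 / Λ (i.1+1))) +
        (Φ |incr1 f (I i) ((J j).2)| + Ψ (1 / Λ (i.1+1))) := by
      intro i
      have hd : |incr12 f (I i) (J j)| ≤
          |incr1 f (I i) ((J j).1)| + |incr1 f (I i) ((J j).2)| := by
        have he : incr12 f (I i) (J j) = incr1 f (I i) ((J j).2) - incr1 f (I i) ((J j).1) := by
          simp only [incr12, incr1]; ring
        rw [he]
        calc |incr1 f (I i) ((J j).2) - incr1 f (I i) ((J j).1)|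
            ≤ |incr1 f (I i) ((J j).2)| + |incr1 f (I i) ((J j).1)| := abs_sub _ _
          _ = _ := by ring
      calc |incr12 f (I i) (J j)| / Λ (i.1+1)
          ≤ (|incr1 f (I i) ((J j).1)| + |incr1 f (I i) ((J j).2)|) / Λ (i.1+1) :=
            div_le_div₀ (by positivity) hd (hΛpos i.1) le_rfl
        _ = |incr1 f (I i) ((J j).1)| / Λ (i.1+1) + |incr1 f (I i) ((J j).2)| / Λ (i.1+1) :=
            add_div _ _ _
        _ ≤ _ := add_le_add (hyoung' _ (abs_nonneg _) _) (hyoung' _ (abs_nonneg _) _)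
    calc ∑ i : Fin n, |incr12 f (I i) (J j)| / Λ (i.1+1)
        ≤ ∑ i : Fin n, ((Φ |incr1 f (I i) ((J j).1)| + Ψ (1 / Λ (i.1+1))) +
            (Φ |incr1 f (I i) ((J j).2)| + Ψ (1 / Λ (i.1+1)))) :=
          Finset.sum_le_sum (fun i _ => hstep i)
      _ = ((∑ i : Fin n, Φ |incr1 f (I i) ((J j).1)|) + ∑ i : Fin n, Ψ (1 / Λ (i.1+1))) +
          ((∑ i : Fin n, Φ |incr1 f (I i) ((J j).2)|) + ∑ i : Fin n, Ψ (1 / Λ (i.1+1))) := by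
          rw [Finset.sum_add_distrib, Finset.sum_add_distrib, Finset.sum_add_distrib]
      _ ≤ (C₁ + S) + (C₁ + S) := by
          have h1 := hC₁ ((J j).1) n I hI
          have h2 := hC₁ ((J j).2) n I hI
          have h3 := hΨpart n
          exact add_le_add (add_le_add h1 h3) (add_le_add h2 h3)
      _ = 2*C₁ + 2*S := by ring
  have hcol : ∀ (n m : ℕ) (I : Fin n → ℝ × ℝ) (J : Fin m → ℝ × ℝ), Nonoverlapping J →
      ∀ i : Fin n, ∑ j : Fin m, |incr12 f (I i) (J j)| / Λ (j.1+1) ≤ 2*C₂ + 2*S := by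
    intro n m I J hJ i
    have hstep : ∀ j : Fin m, |incr12 f (I i) (J j)| / Λ (j.1+1) ≤
        (Φ |incr2 f ((I i).1) (J j)| + Ψ (1 / Λ (j.1+1))) +
        (Φ |incr2 f ((I i).2) (J j)| + Ψ (1 / Λ (j.1+1))) := by
      intro j
      have hd : |incr12 f (I i) (J j)| ≤
          |incr2 f ((I i).1) (J j)| + |incr2 f ((I i).2) (J j)| := by
        have he : incr12 f (I i) (J j) = incr2 f ((I i).2) (J j) - incr2 f ((I i).1) (J j) := by
          simp only [incr12, incr2]; ring
        rw [he]
        calc |incr2 f ((I i).2) (J j) - incr2 f ((I i).1) (J j)|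
            ≤ |incr2 f ((I i).2) (J j)| + |incr2 f ((I i).1) (J j)| := abs_sub _ _
          _ = _ := by ring
      calc |incr12 f (I i) (J j)| / Λ (j.1+1)
          ≤ (|incr2 f ((I i).1) (J j)| + |incr2 f ((I i).2) (J j)|) / Λ (j.1+1) :=
            div_le_div₀ (by positivity) hd (hΛpos j.1) le_rfl
        _ = |incr2 f ((I i).1) (J j)| / Λ (j.1+1) + |incr2 f ((I i).2) (J j)| / Λ (j.1+1) :=
            add_div _ _ _
        _ ≤ _ := add_le_add (hyoung' _ (abs_nonneg _) _) (hyoung' _ (abs_nonneg _) _)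
    calc ∑ j : Fin m, |incr12 f (I i) (J j)| / Λ (j.1+1)
        ≤ ∑ j : Fin m, ((Φ |incr2 f ((I i).1) (J j)| + Ψ (1 / Λ (j.1+1))) +
            (Φ |incr2 f ((I i).2) (J j)| + Ψ (1 / Λ (j.1+1)))) :=
          Finset.sum_le_sum (fun j _ => hstep j)
      _ = ((∑ j : Fin m, Φ |incr2 f ((I i).1) (J j)|) + ∑ j : Fin m, Ψ (1 / Λ (j.1+1))) +
          ((∑ j : Fin m, Φ |incr2 f ((I i).2) (J j)|) + ∑ j : Fin m, Ψ (1 / Λ (j.1+1))) := by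
          rw [Finset.sum_add_distrib, Finset.sum_add_distrib, Finset.sum_add_distrib]
      _ ≤ (C₂ + S) + (C₂ + S) := by
          have h1 := hC₂ ((I i).1) m J hJ
          have h2 := hC₂ ((I i).2) m J hJ
          have h3 := hΨpart m
          exact add_le_add (add_le_add h1 h3) (add_le_add h2 h3)
      _ = 2*C₂ + 2*S := by ring
  -- mixed bound
  have hmix : ∀ (n m : ℕ) (I : Fin n → ℝ × ℝ) (J : Fin m → ℝ × ℝ),
      Nonoverlapping I → Nonoverlapping J →
      ∑ i : Fin n, ∑ j : Fin m,
        |incr12 f (I i) (J j)| / (((i.1:ℝ)+1) * ((j.1:ℝ)+1)) ≤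
        T * (C₂ + S) + T * (C₁ + S) := by
    intro n m I J hI hJ
    have hbase : ∀ (i : Fin n) (j : Fin m),
        |incr12 f (I i) (J j)| / (((i.1:ℝ)+1) * ((j.1:ℝ)+1)) ≤
        1/2 * ((|incr12 f (I i) (J j)| / Λ (j.1+1)) * (Λ (i.1+1) / ((i.1:ℝ)+1)^2)) +
        1/2 * ((|incr12 f (I i) (J j)| / Λ (i.1+1)) * (Λ (j.1+1) / ((j.1:ℝ)+1)^2)) :=
      fun i j => aux_base _ _ _ _ _ (abs_nonneg _) (hΛpos i.1) (hΛpos j.1)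
        (by positivity) (by positivity)
    have hsplit : ∑ i : Fin n, ∑ j : Fin m,
        |incr12 f (I i) (J j)| / (((i.1:ℝ)+1) * ((j.1:ℝ)+1)) ≤
        (∑ i : Fin n, ∑ j : Fin m,
          1/2 * ((|incr12 f (I i) (J j)| / Λ (j.1+1)) * (Λ (i.1+1) / ((i.1:ℝ)+1)^2))) +
        (∑ i : Fin n, ∑ j : Fin m,
          1/2 * ((|incr12 f (I i) (J j)| / Λ (i.1+1)) * (Λ (j.1+1) / ((j.1:ℝ)+1)^2))) := by
      rw [← Finset.sum_add_distrib]
      refine Finset.sum_le_sum (fun i _ => ?_)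
      rw [← Finset.sum_add_distrib]
      exact Finset.sum_le_sum (fun j _ => hbase i j)
    have hA : (∑ i : Fin n, ∑ j : Fin m,
        1/2 * ((|incr12 f (I i) (J j)| / Λ (j.1+1)) * (Λ (i.1+1) / ((i.1:ℝ)+1)^2))) ≤
        T * (C₂ + S) := by
      have hinner : ∀ i : Fin n, (∑ j : Fin m,
          1/2 * ((|incr12 f (I i) (J j)| / Λ (j.1+1)) * (Λ (i.1+1) / ((i.1:ℝ)+1)^2))) ≤
          (Λ (i.1+1) / ((i.1:ℝ)+1)^2) * (C₂ + S) := by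
        intro i
        have heq : (∑ j : Fin m,
            1/2 * ((|incr12 f (I i) (J j)| / Λ (j.1+1)) * (Λ (i.1+1) / ((i.1:ℝ)+1)^2))) =
            (1/2 * (Λ (i.1+1) / ((i.1:ℝ)+1)^2)) *
              ∑ j : Fin m, |incr12 f (I i) (J j)| / Λ (j.1+1) := by
          rw [Finset.mul_sum]
          exact Finset.sum_congr rfl (fun j _ => by ring)
        rw [heq]
        have hnn : (0:ℝ) ≤ 1/2 * (Λ (i.1+1) / ((i.1:ℝ)+1)^2) := by
          have := (hΛpos i.1).le
          positivity
        calc (1/2 * (Λ (i.1+1) / ((i.1:ℝ)+1)^2)) *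
              ∑ j : Fin m, |incr12 f (I i) (J j)| / Λ (j.1+1)
            ≤ (1/2 * (Λ (i.1+1) / ((i.1:ℝ)+1)^2)) * (2*C₂ + 2*S) :=
              mul_le_mul_of_nonneg_left (hcol n m I J hJ i) hnn
          _ = (Λ (i.1+1) / ((i.1:ℝ)+1)^2) * (C₂ + S) := by ring
      calc (∑ i : Fin n, ∑ j : Fin m,
            1/2 * ((|incr12 f (I i) (J j)| / Λ (j.1+1)) * (Λ (i.1+1) / ((i.1:ℝ)+1)^2)))
          ≤ ∑ i : Fin n, (Λ (i.1+1) / ((i.1:ℝ)+1)^2) * (C₂ + S) :=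
            Finset.sum_le_sum (fun i _ => hinner i)
        _ = (∑ i : Fin n, Λ (i.1+1) / ((i.1:ℝ)+1)^2) * (C₂ + S) := by
            rw [← Finset.sum_mul]
        _ ≤ T * (C₂ + S) :=
            mul_le_mul_of_nonneg_right (hTpart n) (by linarith)
    have hB : (∑ i : Fin n, ∑ j : Fin m,
        1/2 * ((|incr12 f (I i) (J j)| / Λ (i.1+1)) * (Λ (j.1+1) / ((j.1:ℝ)+1)^2))) ≤
        T * (C₁ + S) := by
      rw [Finset.sum_comm]
      have hinner : ∀ j : Fin m, (∑ i : Fin n,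
          1/2 * ((|incr12 f (I i) (J j)| / Λ (i.1+1)) * (Λ (j.1+1) / ((j.1:ℝ)+1)^2))) ≤
          (Λ (j.1+1) / ((j.1:ℝ)+1)^2) * (C₁ + S) := by
        intro j
        have heq : (∑ i : Fin n,
            1/2 * ((|incr12 f (I i) (J j)| / Λ (i.1+1)) * (Λ (j.1+1) / ((j.1:ℝ)+1)^2))) =
            (1/2 * (Λ (j.1+1) / ((j.1:ℝ)+1)^2)) *
              ∑ i : Fin n, |incr12 f (I i) (J j)| / Λ (i.1+1) := by
          rw [Finset.mul_sum]
          exact Finset.sum_congr rfl (fun i _ => by ring)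
        rw [heq]
        have hnn : (0:ℝ) ≤ 1/2 * (Λ (j.1+1) / ((j.1:ℝ)+1)^2) := by
          have := (hΛpos j.1).le
          positivity
        calc (1/2 * (Λ (j.1+1) / ((j.1:ℝ)+1)^2)) *
              ∑ i : Fin n, |incr12 f (I i) (J j)| / Λ (i.1+1)
            ≤ (1/2 * (Λ (j.1+1) / ((j.1:ℝ)+1)^2)) * (2*C₁ + 2*S) :=
              mul_le_mul_of_nonneg_left (hrow n m I J hI j) hnn
          _ = (Λ (j.1+1) / ((j.1:ℝ)+1)^2) * (C₁ + S) := by ring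
      calc (∑ j : Fin m, ∑ i : Fin n,
            1/2 * ((|incr12 f (I i) (J j)| / Λ (i.1+1)) * (Λ (j.1+1) / ((j.1:ℝ)+1)^2)))
          ≤ ∑ j : Fin m, (Λ (j.1+1) / ((j.1:ℝ)+1)^2) * (C₁ + S) :=
            Finset.sum_le_sum (fun j _ => hinner j)
        _ = (∑ j : Fin m, Λ (j.1+1) / ((j.1:ℝ)+1)^2) * (C₁ + S) := by
            rw [← Finset.sum_mul]
        _ ≤ T * (C₁ + S) :=
            mul_le_mul_of_nonneg_right (hTpart m) (by linarith)
    exact le_trans hsplit (add_le_add hA hB)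
  -- Var12 bound
  have hV12 : Var12 harmonicSeq f ≤ ENNReal.ofReal (T * (C₂ + S) + T * (C₁ + S)) := by
    refine iSup_le fun n => iSup_le fun m => iSup_le fun I => iSup_le fun J => ?_
    have hterm : ∀ (i : Fin n) (j : Fin m), (0:ℝ) ≤
        |incr12 f (I.1 i) (J.1 j)| / (harmonicSeq (i.1+1) * harmonicSeq (j.1+1)) := by
      intro i j
      apply div_nonneg (abs_nonneg _)
      simp only [harmonicSeq]
      positivity
    have hre : ∀ i ∈ Finset.univ (α := Fin n),
        (∑ j : Fin m, ENNReal.ofReal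
          (|incr12 f (I.1 i) (J.1 j)| / (harmonicSeq (i.1+1) * harmonicSeq (j.1+1)))) =
        ENNReal.ofReal (∑ j : Fin m,
          |incr12 f (I.1 i) (J.1 j)| / (harmonicSeq (i.1+1) * harmonicSeq (j.1+1))) :=
      fun i _ => (ENNReal.ofReal_sum_of_nonneg (fun j _ => hterm i j)).symm
    rw [Finset.sum_congr rfl hre,
      ← ENNReal.ofReal_sum_of_nonneg (fun i _ => Finset.sum_nonneg (fun j _ => hterm i j))]
    apply ENNReal.ofReal_le_ofReal
    have h := hmix n m I.1 J.1 I.2 J.2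
    refine le_trans (le_of_eq (Finset.sum_congr rfl fun i _ =>
      Finset.sum_congr rfl fun j _ => ?_)) h
    simp [harmonicSeq, Nat.cast_add, Nat.cast_one]
  calc Var1 harmonicSeq f + Var2 harmonicSeq f + Var12 harmonicSeq f
      ≤ ENNReal.ofReal (4*T*(C₁+S)) + ENNReal.ofReal (4*T*(C₂+S)) +
        ENNReal.ofReal (T * (C₂ + S) + T * (C₁ + S)) :=
        add_le_add (add_le_add hV1 hV2) hV12
    _ < ⊤ := by
        refine ENNReal.add_lt_top.2 ⟨ENNReal.add_lt_top.2 ⟨?_, ?_⟩, ?_⟩ <;>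
          exact ENNReal.ofReal_lt_top
end
end

section
/- For every p > 1, every function of bounded partial p-variation has bounded harmonic variation: PBV_p ⊆ HBV. That is, if sup_y sup ∑_i |f(I_i,y)|^p < ∞ and sup_x sup ∑_j |f(x,J_j)|^p < ∞ (suprema over finite families of pairwise nonoverlapping subintervals of [0,2π]), then HV_1(f)+HV_2(f)+HV_{1,2}(f) < ∞. -/
open Real Filter Topology MeasureTheory
open scoped ENNReal NNReal BigOperators

noncomputable section

/-! ### Auxiliary lemmas for statement5 -/

private lemma add_rpow_le₅ {a b pp : ℝ} (ha : 0 ≤ a) (hb : 0 ≤ b) (hpp : 0 ≤ pp) :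
    (a + b) ^ pp ≤ 2 ^ pp * (a ^ pp + b ^ pp) := by
  have hmax : a + b ≤ 2 * max a b := by
    rcases le_total a b with h | h
    · rw [max_eq_right h]; linarith
    · rw [max_eq_left h]; linarith
  have h1 : (a + b) ^ pp ≤ (2 * max a b) ^ pp :=
    Real.rpow_le_rpow (by linarith) hmax hpp
  have h2 : ((2:ℝ) * max a b) ^ pp = 2 ^ pp * (max a b) ^ pp :=
    Real.mul_rpow (by norm_num) (le_max_of_le_left ha)
  have h3 : (max a b) ^ pp ≤ a ^ pp + b ^ pp := by
    rcases le_total a b with h | h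
    · rw [max_eq_right h]; nlinarith [Real.rpow_nonneg ha pp]
    · rw [max_eq_left h]; nlinarith [Real.rpow_nonneg hb pp]
  calc (a + b) ^ pp ≤ 2 ^ pp * (max a b) ^ pp := h2 ▸ h1
    _ ≤ 2 ^ pp * (a ^ pp + b ^ pp) :=
        mul_le_mul_of_nonneg_left h3 (Real.rpow_nonneg (by norm_num) pp)

/-- The zeta-type constant `∑ₖ (k+1)^(-s)`. -/
private def Zc₅ (s : ℝ) : ℝ := ∑' k : ℕ, ((k : ℝ) + 1) ^ (-s)

private lemma Zc₅_summable {s : ℝ} (hs : 1 < s) :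
    Summable (fun k : ℕ => ((k : ℝ) + 1) ^ (-s)) := by
  have h := (Real.summable_nat_rpow_inv.mpr hs).comp_injective Nat.succ_injective
  refine h.congr fun k => ?_
  show ((((k + 1 : ℕ)) : ℝ) ^ s)⁻¹ = ((k : ℝ) + 1) ^ (-s)
  rw [Real.rpow_neg (by positivity)]
  push_cast
  ring_nf

private lemma Zc₅_nonneg (s : ℝ) : 0 ≤ Zc₅ s :=
  tsum_nonneg fun k => Real.rpow_nonneg (by positivity) _

private lemma sum_rpow_le_Zc₅ {s : ℝ} (hs : 1 < s) (n : ℕ) :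
    ∑ i : Fin n, ((i.1 : ℝ) + 1) ^ (-s) ≤ Zc₅ s := by
  rw [Fin.sum_univ_eq_sum_range (fun k => ((k : ℝ) + 1) ^ (-s))]
  exact Summable.sum_le_tsum (Finset.range n)
    (fun k _ => Real.rpow_nonneg (by positivity) _) (Zc₅_summable hs)

private lemma single_holder₅ {p q : ℝ} (hpq : Real.HolderConjugate p q) {n : ℕ}
    (a : Fin n → ℝ) (ha : ∀ i, 0 ≤ a i) {C : ℝ} (hC : ∑ i, a i ^ p ≤ C) :
    ∑ i : Fin n, a i / ((i.1 : ℝ) + 1) ≤ C ^ (1/p) * Zc₅ q ^ (1/q) := by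
  have hq1 : 1 < q := hpq.symm.lt
  have hC0 : 0 ≤ C :=
    le_trans (Finset.sum_nonneg fun i _ => Real.rpow_nonneg (ha i) p) hC
  have h := Real.inner_le_Lp_mul_Lq (s := (Finset.univ : Finset (Fin n)))
      a (fun i => ((i.1 : ℝ) + 1)⁻¹) hpq
  have hL : (∑ i : Fin n, |a i| ^ p) ^ (1/p) ≤ C ^ (1/p) := by
    apply Real.rpow_le_rpow (Finset.sum_nonneg fun i _ => by positivity) ?_
      hpq.one_div_nonneg
    calc ∑ i : Fin n, |a i| ^ p = ∑ i : Fin n, a i ^ p :=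
          Finset.sum_congr rfl fun i _ => by rw [abs_of_nonneg (ha i)]
      _ ≤ C := hC
  have hR : (∑ i : Fin n, |((i.1 : ℝ) + 1)⁻¹| ^ q) ^ (1/q) ≤ Zc₅ q ^ (1/q) := by
    apply Real.rpow_le_rpow (Finset.sum_nonneg fun i _ => by positivity) ?_
      hpq.symm.one_div_nonneg
    calc ∑ i : Fin n, |((i.1 : ℝ) + 1)⁻¹| ^ q
        = ∑ i : Fin n, ((i.1 : ℝ) + 1) ^ (-q) := by
          refine Finset.sum_congr rfl fun i _ => ?_
          rw [abs_of_nonneg (by positivity : (0:ℝ) ≤ ((i.1 : ℝ) + 1)⁻¹),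
            Real.inv_rpow (by positivity), ← Real.rpow_neg (by positivity)]
      _ ≤ Zc₅ q := sum_rpow_le_Zc₅ hq1 n
  calc ∑ i : Fin n, a i / ((i.1 : ℝ) + 1)
      = ∑ i : Fin n, a i * ((i.1 : ℝ) + 1)⁻¹ := by
        refine Finset.sum_congr rfl fun i _ => ?_; rw [div_eq_mul_inv]
    _ ≤ (∑ i : Fin n, |a i| ^ p) ^ (1/p) * (∑ i : Fin n, |((i.1 : ℝ) + 1)⁻¹| ^ q) ^ (1/q) := h
    _ ≤ C ^ (1/p) * Zc₅ q ^ (1/q) :=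
        mul_le_mul hL hR (Real.rpow_nonneg (Finset.sum_nonneg fun i _ => by positivity) _)
          (Real.rpow_nonneg hC0 _)

private lemma incr12_eq_incr2₅ (f : ℝ → ℝ → ℝ) (I J : ℝ × ℝ) :
    incr12 f I J = incr2 f I.2 J - incr2 f I.1 J := by
  simp only [incr12, incr2]; ring

private lemma incr12_eq_incr1₅ (f : ℝ → ℝ → ℝ) (I J : ℝ × ℝ) :
    incr12 f I J = incr1 f I J.2 - incr1 f I J.1 := by
  simp only [incr12, incr1]; ring

private lemma mixed_holder₅ {p q : ℝ} (hpq : Real.HolderConjugate p q) {n m : ℕ}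
    (A : Fin n → Fin m → ℝ) (hA : ∀ i j, 0 ≤ A i j)
    {C1 C2 : ℝ} (hC1 : 0 ≤ C1) (hC2 : 0 ≤ C2)
    (h1 : ∀ j, ∑ i, A i j ^ p ≤ C1) (h2 : ∀ i, ∑ j, A i j ^ p ≤ C2) :
    ∑ i, ∑ j, A i j / (((i.1 : ℝ) + 1) * ((j.1 : ℝ) + 1)) ≤
      ((C2 * Zc₅ (3/2)) ^ ((1:ℝ)/2) * (C1 * Zc₅ (3/2)) ^ ((1:ℝ)/2)) ^ (1/p) *
        (Zc₅ ((q+3)/4) * Zc₅ ((q+3)/4)) ^ (1/q) := by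
  have hp1 : 1 < p := hpq.lt
  have hq1 : 1 < q := hpq.symm.lt
  have hp0 : (0:ℝ) < p := by linarith
  have hq0 : (0:ℝ) < q := by linarith
  have hmul : p * q = p + q := hpq.mul_eq_add
  set γ : ℝ := (q + 3) / 4 with hγdef
  have hγ1 : 1 < γ := by rw [hγdef]; linarith
  -- weights
  set w : ℕ → ℝ := fun k => (k : ℝ) + 1 with hwdef
  have hw : ∀ k, (0:ℝ) < w k := fun k => by positivity
  -- exponent identity
  have hexp : (-(3/4)/p) + (-γ/q) = -1 := by
    rw [hγdef]; field_simp; linear_combination (3:ℝ) * hmul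
  -- the two Hoelder factors
  set F : Fin n × Fin m → ℝ :=
    fun x => A x.1 x.2 * w x.1.1 ^ (-(3/4)/p) * w x.2.1 ^ (-(3/4)/p) with hFdef
  set G : Fin n × Fin m → ℝ :=
    fun x => w x.1.1 ^ (-γ/q) * w x.2.1 ^ (-γ/q) with hGdef
  have hFnn : ∀ x, 0 ≤ F x := fun x => by
    apply mul_nonneg (mul_nonneg (hA _ _) (Real.rpow_nonneg (hw _).le _))
      (Real.rpow_nonneg (hw _).le _)
  have key : ∀ x : Fin n × Fin m,
      F x * G x = A x.1 x.2 / (w x.1.1 * w x.2.1) := by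
    intro x
    have e : ∀ k : ℕ, w k ^ (-(3/4)/p) * w k ^ (-γ/q) = (w k)⁻¹ := by
      intro k
      rw [← Real.rpow_add (hw k), hexp, Real.rpow_neg_one]
    calc F x * G x
        = A x.1 x.2 * (w x.1.1 ^ (-(3/4)/p) * w x.1.1 ^ (-γ/q)) *
            (w x.2.1 ^ (-(3/4)/p) * w x.2.1 ^ (-γ/q)) := by rw [hFdef, hGdef]; ring
      _ = A x.1 x.2 * (w x.1.1)⁻¹ * (w x.2.1)⁻¹ := by rw [e, e]
      _ = A x.1 x.2 / (w x.1.1 * w x.2.1) := by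
          rw [div_eq_mul_inv, mul_inv]; ring
  -- main Hoelder
  have hmain := Real.inner_le_Lp_mul_Lq (s := (Finset.univ : Finset (Fin n × Fin m)))
      F G hpq
  -- |F|^p
  have hFp : ∀ x : Fin n × Fin m,
      |F x| ^ p = A x.1 x.2 ^ p * w x.1.1 ^ (-(3/4):ℝ) * w x.2.1 ^ (-(3/4):ℝ) := by
    intro x
    rw [abs_of_nonneg (hFnn x)]
    show (A x.1 x.2 * w x.1.1 ^ (-(3/4)/p) * w x.2.1 ^ (-(3/4)/p)) ^ p = _
    rw [Real.mul_rpow (mul_nonneg (hA _ _) (Real.rpow_nonneg (hw _).le _))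
        (Real.rpow_nonneg (hw _).le _),
      Real.mul_rpow (hA _ _) (Real.rpow_nonneg (hw _).le _),
      ← Real.rpow_mul (hw _).le, ← Real.rpow_mul (hw _).le,
      div_mul_cancel₀ _ hp0.ne']
  -- |G|^q
  have hGq : ∀ x : Fin n × Fin m,
      |G x| ^ q = w x.1.1 ^ (-γ) * w x.2.1 ^ (-γ) := by
    intro x
    rw [abs_of_nonneg (mul_nonneg (Real.rpow_nonneg (hw _).le _)
        (Real.rpow_nonneg (hw _).le _))]
    show (w x.1.1 ^ (-γ/q) * w x.2.1 ^ (-γ/q)) ^ q = _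
    rw [Real.mul_rpow (Real.rpow_nonneg (hw _).le _) (Real.rpow_nonneg (hw _).le _),
      ← Real.rpow_mul (hw _).le, ← Real.rpow_mul (hw _).le,
      div_mul_cancel₀ _ hq0.ne']
  -- bound on ∑ |G|^q
  have hGsum : ∑ x : Fin n × Fin m, |G x| ^ q ≤ Zc₅ γ * Zc₅ γ := by
    calc ∑ x : Fin n × Fin m, |G x| ^ q
        = ∑ i : Fin n, ∑ j : Fin m, w i.1 ^ (-γ) * w j.1 ^ (-γ) := by
          rw [Fintype.sum_prod_type (f := fun x : Fin n × Fin m => |G x| ^ q)]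
          exact Finset.sum_congr rfl fun i _ => Finset.sum_congr rfl fun j _ => hGq (i, j)
      _ = (∑ i : Fin n, w i.1 ^ (-γ)) * (∑ j : Fin m, w j.1 ^ (-γ)) := by
          rw [Finset.sum_mul_sum]
      _ ≤ Zc₅ γ * Zc₅ γ := by
          apply mul_le_mul (sum_rpow_le_Zc₅ hγ1 n) (sum_rpow_le_Zc₅ hγ1 m)
            (Finset.sum_nonneg fun j _ => Real.rpow_nonneg (hw _).le _) (Zc₅_nonneg γ)
  -- Cauchy-Schwarz for ∑ |F|^p
  have h22 : Real.HolderConjugate 2 2 := Real.HolderConjugate.two_two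
  set P : Fin n × Fin m → ℝ := fun x => A x.1 x.2 ^ (p/2) * w x.1.1 ^ (-(3/4):ℝ) with hPdef
  set Q : Fin n × Fin m → ℝ := fun x => A x.1 x.2 ^ (p/2) * w x.2.1 ^ (-(3/4):ℝ) with hQdef
  have hPQ : ∀ x : Fin n × Fin m, |F x| ^ p = P x * Q x := by
    intro x
    rw [hFp x]
    show _ = (A x.1 x.2 ^ (p/2) * w x.1.1 ^ (-(3/4):ℝ)) * (A x.1 x.2 ^ (p/2) * w x.2.1 ^ (-(3/4):ℝ))
    have : A x.1 x.2 ^ p = A x.1 x.2 ^ (p/2) * A x.1 x.2 ^ (p/2) := by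
      rw [← Real.rpow_add' (hA _ _) (by rw [show p/2 + p/2 = p by ring]; exact hp0.ne')]
      norm_num
    rw [this]; ring
  have hP2 : ∀ x : Fin n × Fin m,
      |P x| ^ (2:ℝ) = A x.1 x.2 ^ p * w x.1.1 ^ (-(3/2):ℝ) := by
    intro x
    rw [abs_of_nonneg (mul_nonneg (Real.rpow_nonneg (hA _ _) _)
        (Real.rpow_nonneg (hw _).le _))]
    show (A x.1 x.2 ^ (p/2) * w x.1.1 ^ (-(3/4):ℝ)) ^ (2:ℝ) = _
    rw [Real.mul_rpow (Real.rpow_nonneg (hA _ _) _) (Real.rpow_nonneg (hw _).le _),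
      ← Real.rpow_mul (hA _ _), ← Real.rpow_mul (hw _).le]
    norm_num
  have hQ2 : ∀ x : Fin n × Fin m,
      |Q x| ^ (2:ℝ) = A x.1 x.2 ^ p * w x.2.1 ^ (-(3/2):ℝ) := by
    intro x
    rw [abs_of_nonneg (mul_nonneg (Real.rpow_nonneg (hA _ _) _)
        (Real.rpow_nonneg (hw _).le _))]
    show (A x.1 x.2 ^ (p/2) * w x.2.1 ^ (-(3/4):ℝ)) ^ (2:ℝ) = _
    rw [Real.mul_rpow (Real.rpow_nonneg (hA _ _) _) (Real.rpow_nonneg (hw _).le _),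
      ← Real.rpow_mul (hA _ _), ← Real.rpow_mul (hw _).le]
    norm_num
  have hthreehalf : (1:ℝ) < 3/2 := by norm_num
  have hPsum : ∑ x : Fin n × Fin m, |P x| ^ (2:ℝ) ≤ C2 * Zc₅ (3/2) := by
    calc ∑ x : Fin n × Fin m, |P x| ^ (2:ℝ)
        = ∑ i : Fin n, ∑ j : Fin m, A i j ^ p * w i.1 ^ (-(3/2):ℝ) := by
          rw [Fintype.sum_prod_type (f := fun x : Fin n × Fin m => |P x| ^ (2:ℝ))]
          exact Finset.sum_congr rfl fun i _ => Finset.sum_congr rfl fun j _ => hP2 (i, j)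
      _ = ∑ i : Fin n, w i.1 ^ (-(3/2):ℝ) * ∑ j : Fin m, A i j ^ p := by
          refine Finset.sum_congr rfl fun i _ => ?_
          rw [Finset.mul_sum]
          exact Finset.sum_congr rfl fun j _ => by ring
      _ ≤ ∑ i : Fin n, w i.1 ^ (-(3/2):ℝ) * C2 :=
          Finset.sum_le_sum fun i _ =>
            mul_le_mul_of_nonneg_left (h2 i) (Real.rpow_nonneg (hw _).le _)
      _ = C2 * ∑ i : Fin n, w i.1 ^ (-(3/2):ℝ) := by
          rw [Finset.mul_sum]
          exact Finset.sum_congr rfl fun i _ => by ring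
      _ ≤ C2 * Zc₅ (3/2) :=
          mul_le_mul_of_nonneg_left (sum_rpow_le_Zc₅ hthreehalf n) hC2
  have hQsum : ∑ x : Fin n × Fin m, |Q x| ^ (2:ℝ) ≤ C1 * Zc₅ (3/2) := by
    calc ∑ x : Fin n × Fin m, |Q x| ^ (2:ℝ)
        = ∑ j : Fin m, ∑ i : Fin n, A i j ^ p * w j.1 ^ (-(3/2):ℝ) := by
          rw [Fintype.sum_prod_type_right (f := fun x : Fin n × Fin m => |Q x| ^ (2:ℝ))]
          exact Finset.sum_congr rfl fun j _ => Finset.sum_congr rfl fun i _ => hQ2 (i, j)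
      _ = ∑ j : Fin m, w j.1 ^ (-(3/2):ℝ) * ∑ i : Fin n, A i j ^ p := by
          refine Finset.sum_congr rfl fun j _ => ?_
          rw [Finset.mul_sum]
          exact Finset.sum_congr rfl fun i _ => by ring
      _ ≤ ∑ j : Fin m, w j.1 ^ (-(3/2):ℝ) * C1 :=
          Finset.sum_le_sum fun j _ =>
            mul_le_mul_of_nonneg_left (h1 j) (Real.rpow_nonneg (hw _).le _)
      _ = C1 * ∑ j : Fin m, w j.1 ^ (-(3/2):ℝ) := by
          rw [Finset.mul_sum]
          exact Finset.sum_congr rfl fun j _ => by ring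
      _ ≤ C1 * Zc₅ (3/2) :=
          mul_le_mul_of_nonneg_left (sum_rpow_le_Zc₅ hthreehalf m) hC1
  have hCS := Real.inner_le_Lp_mul_Lq (s := (Finset.univ : Finset (Fin n × Fin m)))
      P Q h22
  have hFsum : ∑ x : Fin n × Fin m, |F x| ^ p ≤
      (C2 * Zc₅ (3/2)) ^ ((1:ℝ)/2) * (C1 * Zc₅ (3/2)) ^ ((1:ℝ)/2) := by
    calc ∑ x : Fin n × Fin m, |F x| ^ p = ∑ x : Fin n × Fin m, P x * Q x :=
          Finset.sum_congr rfl fun x _ => hPQ x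
      _ ≤ (∑ x : Fin n × Fin m, |P x| ^ (2:ℝ)) ^ ((1:ℝ)/2) *
            (∑ x : Fin n × Fin m, |Q x| ^ (2:ℝ)) ^ ((1:ℝ)/2) := hCS
      _ ≤ (C2 * Zc₅ (3/2)) ^ ((1:ℝ)/2) * (C1 * Zc₅ (3/2)) ^ ((1:ℝ)/2) := by
          apply mul_le_mul
          · exact Real.rpow_le_rpow (Finset.sum_nonneg fun x _ => by positivity)
              hPsum (by norm_num)
          · exact Real.rpow_le_rpow (Finset.sum_nonneg fun x _ => by positivity)
              hQsum (by norm_num)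
          · exact Real.rpow_nonneg (Finset.sum_nonneg fun x _ => by positivity) _
          · exact Real.rpow_nonneg (mul_nonneg hC2 (Zc₅_nonneg _)) _
  -- put it together
  calc ∑ i, ∑ j, A i j / (((i.1 : ℝ) + 1) * ((j.1 : ℝ) + 1))
      = ∑ x : Fin n × Fin m, F x * G x := by
        rw [Fintype.sum_prod_type]
        exact Finset.sum_congr rfl fun i _ => Finset.sum_congr rfl fun j _ =>
          (key (i, j)).symm
    _ ≤ (∑ x : Fin n × Fin m, |F x| ^ p) ^ (1/p) *
          (∑ x : Fin n × Fin m, |G x| ^ q) ^ (1/q) := hmain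
    _ ≤ ((C2 * Zc₅ (3/2)) ^ ((1:ℝ)/2) * (C1 * Zc₅ (3/2)) ^ ((1:ℝ)/2)) ^ (1/p) *
          (Zc₅ γ * Zc₅ γ) ^ (1/q) := by
        apply mul_le_mul
        · exact Real.rpow_le_rpow (Finset.sum_nonneg fun x _ => by positivity)
            hFsum (by positivity)
        · exact Real.rpow_le_rpow (Finset.sum_nonneg fun x _ => by positivity)
            hGsum (by positivity)
        · exact Real.rpow_nonneg (Finset.sum_nonneg fun x _ => by positivity) _
        · exact Real.rpow_nonneg (mul_nonneg (Real.rpow_nonneg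
            (mul_nonneg hC2 (Zc₅_nonneg _)) _) (Real.rpow_nonneg
            (mul_nonneg hC1 (Zc₅_nonneg _)) _)) _

private lemma row_bound₅ {p : ℝ} (hp : 0 ≤ p) (f : ℝ → ℝ → ℝ) {C2 : ℝ}
    (h : ∀ (x : ℝ) (m : ℕ) (J : Fin m → ℝ × ℝ), Nonoverlapping J →
      ∑ j, |incr2 f x (J j)| ^ p ≤ C2)
    (Ii : ℝ × ℝ) {m : ℕ} (J : Fin m → ℝ × ℝ) (hJ : Nonoverlapping J) :
    ∑ j, |incr12 f Ii (J j)| ^ p ≤ 2 ^ p * (C2 + C2) := by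
  have step : ∀ j, |incr12 f Ii (J j)| ^ p ≤
      2 ^ p * (|incr2 f Ii.2 (J j)| ^ p + |incr2 f Ii.1 (J j)| ^ p) := by
    intro j
    have h1 : |incr12 f Ii (J j)| ≤ |incr2 f Ii.2 (J j)| + |incr2 f Ii.1 (J j)| := by
      rw [incr12_eq_incr2₅]; exact abs_sub _ _
    calc |incr12 f Ii (J j)| ^ p
        ≤ (|incr2 f Ii.2 (J j)| + |incr2 f Ii.1 (J j)|) ^ p :=
          Real.rpow_le_rpow (abs_nonneg _) h1 hp
      _ ≤ _ := add_rpow_le₅ (abs_nonneg _) (abs_nonneg _) hp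
  calc ∑ j, |incr12 f Ii (J j)| ^ p
      ≤ ∑ j, 2 ^ p * (|incr2 f Ii.2 (J j)| ^ p + |incr2 f Ii.1 (J j)| ^ p) :=
        Finset.sum_le_sum fun j _ => step j
    _ = 2 ^ p * (∑ j, |incr2 f Ii.2 (J j)| ^ p + ∑ j, |incr2 f Ii.1 (J j)| ^ p) := by
        rw [← Finset.sum_add_distrib, Finset.mul_sum]
    _ ≤ 2 ^ p * (C2 + C2) :=
        mul_le_mul_of_nonneg_left (add_le_add (h Ii.2 m J hJ) (h Ii.1 m J hJ))
          (Real.rpow_nonneg (by norm_num) p)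

private lemma col_bound₅ {p : ℝ} (hp : 0 ≤ p) (f : ℝ → ℝ → ℝ) {C1 : ℝ}
    (h : ∀ (y : ℝ) (n : ℕ) (I : Fin n → ℝ × ℝ), Nonoverlapping I →
      ∑ i, |incr1 f (I i) y| ^ p ≤ C1)
    (Jj : ℝ × ℝ) {n : ℕ} (I : Fin n → ℝ × ℝ) (hI : Nonoverlapping I) :
    ∑ i, |incr12 f (I i) Jj| ^ p ≤ 2 ^ p * (C1 + C1) := by
  have step : ∀ i, |incr12 f (I i) Jj| ^ p ≤
      2 ^ p * (|incr1 f (I i) Jj.2| ^ p + |incr1 f (I i) Jj.1| ^ p) := by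
    intro i
    have h1 : |incr12 f (I i) Jj| ≤ |incr1 f (I i) Jj.2| + |incr1 f (I i) Jj.1| := by
      rw [incr12_eq_incr1₅]; exact abs_sub _ _
    calc |incr12 f (I i) Jj| ^ p
        ≤ (|incr1 f (I i) Jj.2| + |incr1 f (I i) Jj.1|) ^ p :=
          Real.rpow_le_rpow (abs_nonneg _) h1 hp
      _ ≤ _ := add_rpow_le₅ (abs_nonneg _) (abs_nonneg _) hp
  calc ∑ i, |incr12 f (I i) Jj| ^ p
      ≤ ∑ i, 2 ^ p * (|incr1 f (I i) Jj.2| ^ p + |incr1 f (I i) Jj.1| ^ p) :=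
        Finset.sum_le_sum fun i _ => step i
    _ = 2 ^ p * (∑ i, |incr1 f (I i) Jj.2| ^ p + ∑ i, |incr1 f (I i) Jj.1| ^ p) := by
        rw [← Finset.sum_add_distrib, Finset.mul_sum]
    _ ≤ 2 ^ p * (C1 + C1) :=
        mul_le_mul_of_nonneg_left (add_le_add (h Jj.2 n I hI) (h Jj.1 n I hI))
          (Real.rpow_nonneg (by norm_num) p)

/-- for every `p > 1`, `PBV_p ⊆ HBV`. -/
theorem statement5 (p : ℝ) (hp : 1 < p) (f : ℝ → ℝ → ℝ) (hper : Periodic2 f)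
    (hV1 : ∃ C : ℝ, ∀ (y : ℝ) (n : ℕ) (I : Fin n → ℝ × ℝ), Nonoverlapping I →
      ∑ i : Fin n, |incr1 f (I i) y| ^ p ≤ C)
    (hV2 : ∃ C : ℝ, ∀ (x : ℝ) (m : ℕ) (J : Fin m → ℝ × ℝ), Nonoverlapping J →
      ∑ j : Fin m, |incr2 f x (J j)| ^ p ≤ C) :
    Var1 harmonicSeq f + Var2 harmonicSeq f + Var12 harmonicSeq f < ⊤ := by
  obtain ⟨C1, hC1⟩ := hV1
  obtain ⟨C2, hC2⟩ := hV2
  have hnov0 : Nonoverlapping (fun i : Fin 0 => ((0:ℝ), (0:ℝ))) :=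
    ⟨fun i => i.elim0, fun i => i.elim0⟩
  have hC1nn : 0 ≤ C1 := by simpa using hC1 0 0 _ hnov0
  have hC2nn : 0 ≤ C2 := by simpa using hC2 0 0 _ hnov0
  set q : ℝ := p.conjExponent with hqdef
  have hpq : p.HolderConjugate q := Real.HolderConjugate.conjExponent hp
  have hp0 : (0:ℝ) ≤ p := by linarith
  have hD1nn : (0:ℝ) ≤ 2 ^ p * (C1 + C1) := by positivity
  have hD2nn : (0:ℝ) ≤ 2 ^ p * (C2 + C2) := by positivity
  -- bound Var1
  have hVar1 : Var1 harmonicSeq f ≤ ENNReal.ofReal (C1 ^ (1/p) * Zc₅ q ^ (1/q)) := by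
    refine iSup_le fun y => iSup_le fun n => iSup_le fun I => ?_
    rw [← ENNReal.ofReal_sum_of_nonneg (fun i _ => div_nonneg (abs_nonneg _)
      (by simp only [harmonicSeq]; positivity))]
    apply ENNReal.ofReal_le_ofReal
    have := single_holder₅ hpq (fun i : Fin n => |incr1 f (I.1 i) y|)
      (fun i => abs_nonneg _) (hC1 y n I.1 I.2)
    refine le_trans (le_of_eq ?_) this
    refine Finset.sum_congr rfl fun i _ => ?_
    simp only [harmonicSeq]
    push_cast
    ring
  have hVar2 : Var2 harmonicSeq f ≤ ENNReal.ofReal (C2 ^ (1/p) * Zc₅ q ^ (1/q)) := by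
    refine iSup_le fun x => iSup_le fun m => iSup_le fun J => ?_
    rw [← ENNReal.ofReal_sum_of_nonneg (fun j _ => div_nonneg (abs_nonneg _)
      (by simp only [harmonicSeq]; positivity))]
    apply ENNReal.ofReal_le_ofReal
    have := single_holder₅ hpq (fun j : Fin m => |incr2 f x (J.1 j)|)
      (fun j => abs_nonneg _) (hC2 x m J.1 J.2)
    refine le_trans (le_of_eq ?_) this
    refine Finset.sum_congr rfl fun j _ => ?_
    simp only [harmonicSeq]
    push_cast
    ring
  have hVar12 : Var12 harmonicSeq f ≤ ENNReal.ofReal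
      (((2 ^ p * (C2 + C2) * Zc₅ (3/2)) ^ ((1:ℝ)/2) *
        (2 ^ p * (C1 + C1) * Zc₅ (3/2)) ^ ((1:ℝ)/2)) ^ (1/p) *
        (Zc₅ ((q+3)/4) * Zc₅ ((q+3)/4)) ^ (1/q)) := by
    refine iSup_le fun n => iSup_le fun m => iSup_le fun I => iSup_le fun J => ?_
    have e1 : ∀ i : Fin n, ∑ j : Fin m,
        ENNReal.ofReal (|incr12 f (I.1 i) (J.1 j)| / (harmonicSeq (i.1 + 1) * harmonicSeq (j.1 + 1)))
        = ENNReal.ofReal (∑ j : Fin m,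
            |incr12 f (I.1 i) (J.1 j)| / (harmonicSeq (i.1 + 1) * harmonicSeq (j.1 + 1))) := by
      intro i
      rw [ENNReal.ofReal_sum_of_nonneg (fun j _ => by
        apply div_nonneg (abs_nonneg _)
        simp only [harmonicSeq]; positivity)]
    calc (∑ i : Fin n, ∑ j : Fin m,
          ENNReal.ofReal (|incr12 f (I.1 i) (J.1 j)| / (harmonicSeq (i.1 + 1) * harmonicSeq (j.1 + 1))))
        = ENNReal.ofReal (∑ i : Fin n, ∑ j : Fin m,
            |incr12 f (I.1 i) (J.1 j)| / (harmonicSeq (i.1 + 1) * harmonicSeq (j.1 + 1))) := by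
          rw [ENNReal.ofReal_sum_of_nonneg (fun i _ => Finset.sum_nonneg fun j _ => by
            apply div_nonneg (abs_nonneg _)
            simp only [harmonicSeq]; positivity)]
          exact Finset.sum_congr rfl fun i _ => e1 i
      _ ≤ _ := by
          apply ENNReal.ofReal_le_ofReal
          have hmix := mixed_holder₅ hpq
            (fun (i : Fin n) (j : Fin m) => |incr12 f (I.1 i) (J.1 j)|)
            (fun i j => abs_nonneg _) hD1nn hD2nn
            (fun j => col_bound₅ hp0 f hC1 (J.1 j) I.1 I.2)
            (fun i => row_bound₅ hp0 f hC2 (I.1 i) J.1 J.2)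
          refine le_trans (le_of_eq ?_) hmix
          refine Finset.sum_congr rfl fun i _ => Finset.sum_congr rfl fun j _ => ?_
          simp only [harmonicSeq]
          push_cast
          ring
  calc Var1 harmonicSeq f + Var2 harmonicSeq f + Var12 harmonicSeq f
      ≤ ENNReal.ofReal (C1 ^ (1/p) * Zc₅ q ^ (1/q)) +
        ENNReal.ofReal (C2 ^ (1/p) * Zc₅ q ^ (1/q)) +
        ENNReal.ofReal
          (((2 ^ p * (C2 + C2) * Zc₅ (3/2)) ^ ((1:ℝ)/2) *
            (2 ^ p * (C1 + C1) * Zc₅ (3/2)) ^ ((1:ℝ)/2)) ^ (1/p) *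
            (Zc₅ ((q+3)/4) * Zc₅ ((q+3)/4)) ^ (1/q)) :=
        add_le_add (add_le_add hVar1 hVar2) hVar12
    _ < ⊤ := by
        exact ENNReal.add_lt_top.mpr ⟨ENNReal.add_lt_top.mpr
          ⟨ENNReal.ofReal_lt_top, ENNReal.ofReal_lt_top⟩, ENNReal.ofReal_lt_top⟩
end
end

section
/- Let g be a real function on [0,2π] and 0 = t_1 < t_2 < … < t_{2m} = 2π be such that g is increasing on [t_i,t_{i+1}] for odd i and decreasing on [t_i,t_{i+1}] for even i, and suppose the successive oscillations strictly decrease: |g(t_{i+1})−g(t_i)| > |g(t_{i+2})−g(t_{i+1})| for i = 1,…,2m−2. Then for any nondecreasing sequence Λ = {λ_n} of positive numbers with λ_n → ∞, the Λ-variation of g equals ∑_{i=1}^{2m−1} |g(t_{i+1})−g(t_i)|/λ_i. -/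
open Real Filter Topology MeasureTheory
open scoped ENNReal NNReal BigOperators

noncomputable section

section Statement16Aux

variable {g : ℝ → ℝ} {t : ℕ → ℝ} {N : ℕ}

/-- oscillation of `g` on the `p`-th piece -/
private def osc16 (g : ℝ → ℝ) (t : ℕ → ℝ) (p : ℕ) : ℝ := |g (t (p + 1)) - g (t p)|

/-- `osc16` extended by zero beyond `N` -/
private def ddE (g : ℝ → ℝ) (t : ℕ → ℝ) (N : ℕ) (p : ℕ) : ℝ :=
  if p + 1 ≤ N then osc16 g t p else 0

private lemma ddE_nonneg (g : ℝ → ℝ) (t : ℕ → ℝ) (N p : ℕ) : 0 ≤ ddE g t N p := by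
  unfold ddE; split
  · exact abs_nonneg _
  · exact le_rfl

private lemma s16_eps (p : ℕ) : (-1:ℝ)^p = 1 ∨ (-1:ℝ)^p = -1 := by
  rcases Nat.even_or_odd p with h|h
  · exact Or.inl h.neg_one_pow
  · exact Or.inr h.neg_one_pow

private lemma s16_piece
    (hgE : ∀ p, p + 1 ≤ N → p % 2 = 0 → MonotoneOn g (Set.Icc (t p) (t (p + 1))))
    (hgO : ∀ p, p + 1 ≤ N → p % 2 = 1 → AntitoneOn g (Set.Icc (t p) (t (p + 1))))
    {p : ℕ} (hp : p + 1 ≤ N) {x y : ℝ}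
    (hx : t p ≤ x) (hxy : x ≤ y) (hy : y ≤ t (p + 1)) :
    0 ≤ (-1:ℝ)^p * (g y - g x) := by
  rcases Nat.even_or_odd p with h|h
  · rw [h.neg_one_pow]
    have := hgE p hp (Nat.even_iff.mp h) ⟨hx, hxy.trans hy⟩ ⟨hx.trans hxy, hy⟩ hxy
    linarith
  · rw [h.neg_one_pow]
    have := hgO p hp (Nat.odd_iff.mp h) ⟨hx, hxy.trans hy⟩ ⟨hx.trans hxy, hy⟩ hxy
    linarith

private lemma s16_osc_eq (ht : ∀ i, i + 1 ≤ N → t i < t (i + 1))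
    (hgE : ∀ p, p + 1 ≤ N → p % 2 = 0 → MonotoneOn g (Set.Icc (t p) (t (p + 1))))
    (hgO : ∀ p, p + 1 ≤ N → p % 2 = 1 → AntitoneOn g (Set.Icc (t p) (t (p + 1))))
    {p : ℕ} (hp : p + 1 ≤ N) :
    osc16 g t p = (-1:ℝ)^p * (g (t (p + 1)) - g (t p)) := by
  have h := s16_piece hgE hgO hp le_rfl (le_of_lt (ht p hp)) le_rfl
  rcases s16_eps p with he|he <;> rw [he] at h ⊢
  · rw [one_mul]; exact abs_of_nonneg (by linarith)
  · rw [osc16, abs_of_nonpos (by linarith)]; ring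

private lemma s16_tmono (ht : ∀ i, i + 1 ≤ N → t i < t (i + 1)) :
    ∀ i j, i ≤ j → j ≤ N → t i ≤ t j := by
  intro i j
  induction j with
  | zero => intro h _; rw [Nat.le_zero.mp h]
  | succ j ih =>
    intro hij hjN
    rcases Nat.eq_or_lt_of_le hij with h|h
    · exact le_of_eq (congrArg t h)
    · exact le_trans (ih (by omega) (by omega)) (le_of_lt (ht j (by omega)))

private lemma s16_osc_anti
    (hosc : ∀ p, p + 2 ≤ N → osc16 g t (p + 1) ≤ osc16 g t p) :
    ∀ i j, i ≤ j → j + 1 ≤ N → osc16 g t j ≤ osc16 g t i := by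
  intro i j
  induction j with
  | zero => intro h _; rw [Nat.le_zero.mp h]
  | succ j ih =>
    intro hij hjN
    rcases Nat.eq_or_lt_of_le hij with h|h
    · rw [h]
    · exact le_trans (hosc j (by omega)) (ih (by omega) (by omega))

private lemma s16_A' (ht : ∀ i, i + 1 ≤ N → t i < t (i + 1))
    (hgE : ∀ p, p + 1 ≤ N → p % 2 = 0 → MonotoneOn g (Set.Icc (t p) (t (p + 1))))
    (hgO : ∀ p, p + 1 ≤ N → p % 2 = 1 → AntitoneOn g (Set.Icc (t p) (t (p + 1))))
    (hosc : ∀ p, p + 2 ≤ N → osc16 g t (p + 1) ≤ osc16 g t p) :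
    ∀ j p b, p + j = N → 1 ≤ j → t p ≤ b → b ≤ t N →
      0 ≤ (-1:ℝ)^p * (g b - g (t p)) ∧ (-1:ℝ)^p * (g b - g (t p)) ≤ osc16 g t p := by
  intro j
  induction j with
  | zero => intro p b _ h; omega
  | succ j ih =>
    intro p b hpj _ hpb hbN
    have hp1 : p + 1 ≤ N := by omega
    by_cases hb : b ≤ t (p + 1)
    · have h1 := s16_piece hgE hgO hp1 le_rfl hpb hb
      have h2 := s16_piece hgE hgO hp1 hpb hb le_rfl
      have h3 := s16_osc_eq ht hgE hgO hp1
      have idt : (-1:ℝ)^p * (g (t (p+1)) - g (t p)) =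
          (-1:ℝ)^p * (g b - g (t p)) + (-1:ℝ)^p * (g (t (p+1)) - g b) := by ring
      exact ⟨h1, by linarith⟩
    · push_neg at hb
      have hj1 : 1 ≤ j := by
        rcases Nat.eq_zero_or_pos j with h|h
        · subst h
          have hpN : p + 1 = N := by omega
          rw [hpN] at hb; linarith
        · exact h
      obtain ⟨hI1, hI2⟩ := ih (p+1) b (by omega) hj1 (le_of_lt hb) hbN
      have hpow : (-1:ℝ)^(p+1) = -((-1:ℝ)^p) := by rw [pow_succ]; ring
      rw [hpow] at hI1 hI2
      have hoscp : osc16 g t (p+1) ≤ osc16 g t p := hosc p (by omega)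
      have h3 := s16_osc_eq ht hgE hgO hp1
      have idt : (-1:ℝ)^p * (g b - g (t p)) =
          (-1:ℝ)^p * (g (t (p+1)) - g (t p)) + (-1:ℝ)^p * (g b - g (t (p+1))) := by ring
      have hosc1 : 0 ≤ osc16 g t (p+1) := abs_nonneg _
      constructor <;> linarith

private lemma s16_A (ht : ∀ i, i + 1 ≤ N → t i < t (i + 1))
    (hgE : ∀ p, p + 1 ≤ N → p % 2 = 0 → MonotoneOn g (Set.Icc (t p) (t (p + 1))))
    (hgO : ∀ p, p + 1 ≤ N → p % 2 = 1 → AntitoneOn g (Set.Icc (t p) (t (p + 1))))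
    (hosc : ∀ p, p + 2 ≤ N → osc16 g t (p + 1) ≤ osc16 g t p)
    {p : ℕ} (hp : p + 1 ≤ N) {a b : ℝ}
    (ha1 : t p ≤ a) (ha2 : a ≤ t (p + 1)) (hab : a ≤ b) (hbN : b ≤ t N) :
    |g b - g a| ≤ osc16 g t p := by
  have h3 := s16_osc_eq ht hgE hgO hp
  by_cases hb : b ≤ t (p + 1)
  · have h1 := s16_piece hgE hgO hp ha1 hab hb
    have h2 := s16_piece hgE hgO hp le_rfl ha1 ha2
    have h4 := s16_piece hgE hgO hp (ha1.trans hab) hb le_rfl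
    have idt : (-1:ℝ)^p * (g (t (p+1)) - g (t p)) = (-1:ℝ)^p * (g a - g (t p)) +
        (-1:ℝ)^p * (g b - g a) + (-1:ℝ)^p * (g (t (p+1)) - g b) := by ring
    rcases s16_eps p with he|he <;> rw [he] at h1 h2 h3 h4 idt <;>
      rw [abs_le] <;> constructor <;> linarith
  · push_neg at hb
    have hp2 : p + 1 + 1 ≤ N := by
      by_contra h
      have hpN : p + 1 = N := by omega
      rw [hpN] at hb; linarith
    obtain ⟨hA1, hA2⟩ := s16_A' ht hgE hgO hosc (N - (p+1)) (p+1) b (by omega) (by omega)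
      (le_of_lt hb) hbN
    have hpow : (-1:ℝ)^(p+1) = -((-1:ℝ)^p) := by rw [pow_succ]; ring
    rw [hpow] at hA1 hA2
    have h2 := s16_piece hgE hgO hp le_rfl ha1 ha2
    have h4 := s16_piece hgE hgO hp ha1 ha2 le_rfl
    have hoscp : osc16 g t (p+1) ≤ osc16 g t p := hosc p (by omega)
    rcases s16_eps p with he|he <;> rw [he] at h2 h3 h4 hA1 hA2 <;>
      rw [abs_le] <;> constructor <;> linarith

private lemma s16_B (ht : ∀ i, i + 1 ≤ N → t i < t (i + 1))
    (hgE : ∀ p, p + 1 ≤ N → p % 2 = 0 → MonotoneOn g (Set.Icc (t p) (t (p + 1))))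
    (hgO : ∀ p, p + 1 ≤ N → p % 2 = 1 → AntitoneOn g (Set.Icc (t p) (t (p + 1))))
    (hosc : ∀ p, p + 2 ≤ N → osc16 g t (p + 1) ≤ osc16 g t p)
    (I : ℕ → ℝ × ℝ) :
    ∀ n (s : Finset ℕ) (c : ℝ) (q : ℕ), s.card = n → q + 1 ≤ N → t q ≤ c → c ≤ t (q + 1) →
      (∀ i ∈ s, t 0 ≤ (I i).1 ∧ (I i).1 < (I i).2 ∧ (I i).2 ≤ c) →
      (∀ i ∈ s, ∀ j ∈ s, i ≠ j → (I i).2 ≤ (I j).1 ∨ (I j).2 ≤ (I i).1) →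
      ∑ i ∈ s, |g (I i).2 - g (I i).1| ≤
        (∑ p ∈ Finset.range q, osc16 g t p) + |g c - g (t q)| := by
  intro n
  induction n with
  | zero =>
    intro s c q hcard _ _ _ _ _
    rw [Finset.card_eq_zero.mp hcard, Finset.sum_empty]
    have h1 : (0:ℝ) ≤ ∑ p ∈ Finset.range q, osc16 g t p :=
      Finset.sum_nonneg fun p _ => abs_nonneg _
    have h2 := abs_nonneg (g c - g (t q))
    linarith
  | succ n ih =>
    intro s c q hcard hq htc hct hmem hov
    classical
    have hsne : s.Nonempty := Finset.card_pos.mp (by omega)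
    obtain ⟨i₀, hi₀, hmax⟩ := Finset.exists_max_image s (fun i => (I i).1) hsne
    obtain ⟨h0a, hab, hbc⟩ := hmem i₀ hi₀
    have herase : ∀ i ∈ s.erase i₀, (I i).2 ≤ (I i₀).1 := by
      intro i hi
      have hins := Finset.mem_of_mem_erase hi
      have hne := Finset.ne_of_mem_erase hi
      rcases hov i hins i₀ hi₀ hne with h|h
      · exact h
      · exfalso; have := hmax i hins; linarith
    set r := Nat.findGreatest (fun p => t p ≤ (I i₀).1) q with hr
    have htra : t r ≤ (I i₀).1 := by
      have := Nat.findGreatest_spec (P := fun p => t p ≤ (I i₀).1) (Nat.zero_le q) h0a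
      rw [← hr] at this; exact this
    have hrq : r ≤ q := by rw [hr]; exact Nat.findGreatest_le q
    have hac : (I i₀).1 ≤ c := le_of_lt (lt_of_lt_of_le hab hbc)
    have hatr : (I i₀).1 ≤ t (r + 1) := by
      rcases Nat.eq_or_lt_of_le hrq with h|h
      · rw [h]; exact le_trans hac hct
      · have hng := Nat.findGreatest_is_greatest (P := fun p => t p ≤ (I i₀).1) (n := q)
          (k := r + 1) (by rw [← hr]; omega) (by omega)
        exact le_of_lt (not_le.mp hng)
    have hr1N : r + 1 ≤ N := by omega
    have hIH := ih (s.erase i₀) (I i₀).1 r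
      (by rw [Finset.card_erase_of_mem hi₀, hcard]; omega)
      hr1N htra hatr
      (fun i hi => ⟨(hmem i (Finset.mem_of_mem_erase hi)).1,
        (hmem i (Finset.mem_of_mem_erase hi)).2.1, herase i hi⟩)
      (fun i hi j hj hne =>
        hov i (Finset.mem_of_mem_erase hi) j (Finset.mem_of_mem_erase hj) hne)
    have hK : |g (I i₀).1 - g (t r)| + |g (I i₀).2 - g (I i₀).1| ≤
        (∑ p ∈ Finset.Ico r q, osc16 g t p) + |g c - g (t q)| := by
      rcases Nat.eq_or_lt_of_le hrq with hrq'|hrq'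
      · have hta : t q ≤ (I i₀).1 := by rw [← hrq']; exact htra
        have h1 := s16_piece hgE hgO hq le_rfl hta (hac.trans hct)
        have h2 := s16_piece hgE hgO hq hta (le_of_lt hab) (hbc.trans hct)
        have h3 := s16_piece hgE hgO hq (hta.trans (le_of_lt hab)) hbc hct
        rw [hrq', Finset.Ico_self, Finset.sum_empty]
        rcases s16_eps q with he|he <;> rw [he] at h1 h2 h3
        · rw [abs_of_nonneg (by linarith : (0:ℝ) ≤ g (I i₀).1 - g (t q)),
            abs_of_nonneg (by linarith : (0:ℝ) ≤ g (I i₀).2 - g (I i₀).1),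
            abs_of_nonneg (by linarith : (0:ℝ) ≤ g c - g (t q))]
          linarith
        · rw [abs_of_nonpos (by linarith : g (I i₀).1 - g (t q) ≤ 0),
            abs_of_nonpos (by linarith : g (I i₀).2 - g (I i₀).1 ≤ 0),
            abs_of_nonpos (by linarith : g c - g (t q) ≤ 0)]
          linarith
      · by_cases hbr : (I i₀).2 ≤ t (r + 1)
        · have h1 := s16_piece hgE hgO hr1N le_rfl htra hatr
          have h2 := s16_piece hgE hgO hr1N htra (le_of_lt hab) hbr
          have h4 := s16_piece hgE hgO hr1N (htra.trans (le_of_lt hab)) hbr le_rfl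
          have hoscr := s16_osc_eq ht hgE hgO hr1N
          have hmem_r : osc16 g t r ≤ ∑ p ∈ Finset.Ico r q, osc16 g t p :=
            Finset.single_le_sum (fun p _ => abs_nonneg _)
              (Finset.mem_Ico.mpr ⟨le_rfl, hrq'⟩)
          have habs := abs_nonneg (g c - g (t q))
          rcases s16_eps r with he|he <;> rw [he] at h1 h2 h4 hoscr
          · rw [abs_of_nonneg (by linarith : (0:ℝ) ≤ g (I i₀).1 - g (t r)),
              abs_of_nonneg (by linarith : (0:ℝ) ≤ g (I i₀).2 - g (I i₀).1)]
            linarith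
          · rw [abs_of_nonpos (by linarith : g (I i₀).1 - g (t r) ≤ 0),
              abs_of_nonpos (by linarith : g (I i₀).2 - g (I i₀).1 ≤ 0)]
            linarith
        · push_neg at hbr
          have h1 := s16_piece hgE hgO hr1N le_rfl htra hatr
          have h4 := s16_piece hgE hgO hr1N htra hatr le_rfl
          have hoscr := s16_osc_eq ht hgE hgO hr1N
          have htri := abs_sub_le (g (I i₀).2) (g (t (r+1))) (g (I i₀).1)
          have hsum_r : |g (I i₀).1 - g (t r)| + |g (t (r+1)) - g (I i₀).1| ≤
              osc16 g t r := by
            rcases s16_eps r with he|he <;> rw [he] at h1 h4 hoscr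
            · rw [abs_of_nonneg (by linarith : (0:ℝ) ≤ g (I i₀).1 - g (t r)),
                abs_of_nonneg (by linarith : (0:ℝ) ≤ g (t (r+1)) - g (I i₀).1)]
              linarith
            · rw [abs_of_nonpos (by linarith : g (I i₀).1 - g (t r) ≤ 0),
                abs_of_nonpos (by linarith : g (t (r+1)) - g (I i₀).1 ≤ 0)]
              linarith
          rcases Nat.eq_or_lt_of_le (show r + 1 ≤ q by omega) with hr1q|hr1q
          · have htqb : t q ≤ (I i₀).2 := by rw [← hr1q]; exact le_of_lt hbr
            have h5 := s16_piece hgE hgO hq le_rfl htqb (hbc.trans hct)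
            have h6 := s16_piece hgE hgO hq htqb hbc hct
            have hX : |g (I i₀).2 - g (t (r+1))| ≤ |g c - g (t q)| := by
              rw [hr1q]
              rcases s16_eps q with he|he <;> rw [he] at h5 h6
              · rw [abs_of_nonneg (by linarith : (0:ℝ) ≤ g (I i₀).2 - g (t q)),
                  abs_of_nonneg (by linarith : (0:ℝ) ≤ g c - g (t q))]
                linarith
              · rw [abs_of_nonpos (by linarith : g (I i₀).2 - g (t q) ≤ 0),
                  abs_of_nonpos (by linarith : g c - g (t q) ≤ 0)]
                linarith
            have hIco : ∑ p ∈ Finset.Ico r q, osc16 g t p = osc16 g t r := by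
              rw [← hr1q, Nat.Ico_succ_singleton, Finset.sum_singleton]
            linarith
          · have hX : |g (I i₀).2 - g (t (r+1))| ≤ osc16 g t (r+1) := by
              refine s16_A ht hgE hgO hosc (show r+1+1 ≤ N by omega) le_rfl
                (le_of_lt (ht (r+1) (by omega))) (le_of_lt hbr) ?_
              exact le_trans hbc (le_trans hct (s16_tmono ht (q+1) N hq le_rfl))
            have hpair : osc16 g t r + osc16 g t (r+1) ≤
                ∑ p ∈ Finset.Ico r q, osc16 g t p := by
              have hsub : ({r, r+1} : Finset ℕ) ⊆ Finset.Ico r q := by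
                intro x hx
                simp only [Finset.mem_insert, Finset.mem_singleton] at hx
                rcases hx with h|h <;> subst h <;> exact Finset.mem_Ico.mpr ⟨by omega, by omega⟩
              have := Finset.sum_le_sum_of_subset_of_nonneg hsub
                (fun p _ _ => abs_nonneg (g (t (p+1)) - g (t p)))
              rwa [Finset.sum_pair (by omega : r ≠ r+1)] at this
            have habs := abs_nonneg (g c - g (t q))
            linarith
    have hsplit := Finset.sum_erase_add s (fun i => |g (I i).2 - g (I i).1|) hi₀
    have hrange : (∑ p ∈ Finset.range r, osc16 g t p) +
        ∑ p ∈ Finset.Ico r q, osc16 g t p = ∑ p ∈ Finset.range q, osc16 g t p := by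
      simp only [Finset.range_eq_Ico]
      exact Finset.sum_Ico_consecutive _ (Nat.zero_le r) hrq
    linarith

private lemma s16_C (ht : ∀ i, i + 1 ≤ N → t i < t (i + 1))
    (hgE : ∀ p, p + 1 ≤ N → p % 2 = 0 → MonotoneOn g (Set.Icc (t p) (t (p + 1))))
    (hgO : ∀ p, p + 1 ≤ N → p % 2 = 1 → AntitoneOn g (Set.Icc (t p) (t (p + 1))))
    (hosc : ∀ p, p + 2 ≤ N → osc16 g t (p + 1) ≤ osc16 g t p)
    (I : ℕ → ℝ × ℝ) :
    ∀ n (s : Finset ℕ), s.card = n →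
      (∀ i ∈ s, t 0 ≤ (I i).1 ∧ (I i).1 < (I i).2 ∧ (I i).2 ≤ t N) →
      (∀ i ∈ s, ∀ j ∈ s, i ≠ j → (I i).2 ≤ (I j).1 ∨ (I j).2 ≤ (I i).1) →
      ∑ i ∈ s, |g (I i).2 - g (I i).1| ≤ ∑ p ∈ Finset.range n, ddE g t N p := by
  intro n
  induction n with
  | zero =>
    intro s hcard _ _
    rw [Finset.card_eq_zero.mp hcard]
    simp
  | succ n ih =>
    intro s hcard hmem hov
    classical
    have hsne : s.Nonempty := Finset.card_pos.mp (by omega)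
    obtain ⟨i₀, hi₀, hmax⟩ := Finset.exists_max_image s (fun i => (I i).1) hsne
    obtain ⟨h0a, hab, hbN⟩ := hmem i₀ hi₀
    have hN1 : 1 ≤ N := by
      by_contra h
      have hN0 : N = 0 := by omega
      rw [hN0] at hbN; linarith
    have herase : ∀ i ∈ s.erase i₀, (I i).2 ≤ (I i₀).1 := by
      intro i hi
      have hins := Finset.mem_of_mem_erase hi
      have hne := Finset.ne_of_mem_erase hi
      rcases hov i hins i₀ hi₀ hne with h|h
      · exact h
      · exfalso; have := hmax i hins; linarith
    set r := Nat.findGreatest (fun p => t p ≤ (I i₀).1) (N - 1) with hr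
    have htra : t r ≤ (I i₀).1 := by
      have := Nat.findGreatest_spec (P := fun p => t p ≤ (I i₀).1) (Nat.zero_le (N-1)) h0a
      rw [← hr] at this; exact this
    have hrN : r ≤ N - 1 := by rw [hr]; exact Nat.findGreatest_le _
    have hr1N : r + 1 ≤ N := by omega
    have hatr : (I i₀).1 ≤ t (r + 1) := by
      rcases Nat.eq_or_lt_of_le hrN with h|h
      · have hre : r + 1 = N := by omega
        rw [hre]; exact le_trans (le_of_lt hab) hbN
      · have hng := Nat.findGreatest_is_greatest (P := fun p => t p ≤ (I i₀).1) (n := N - 1)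
          (k := r + 1) (by rw [← hr]; omega) (by omega)
        exact le_of_lt (not_le.mp hng)
    have hcard' : (s.erase i₀).card = n := by rw [Finset.card_erase_of_mem hi₀, hcard]; omega
    have hsplit := Finset.sum_erase_add s (fun i => |g (I i).2 - g (I i).1|) hi₀
    by_cases hcase : n ≤ r
    · have hIH := ih (s.erase i₀) hcard'
        (fun i hi => hmem i (Finset.mem_of_mem_erase hi))
        (fun i hi j hj hne =>
          hov i (Finset.mem_of_mem_erase hi) j (Finset.mem_of_mem_erase hj) hne)
      have hAb : |g (I i₀).2 - g (I i₀).1| ≤ osc16 g t r :=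
        s16_A ht hgE hgO hosc hr1N htra hatr (le_of_lt hab) hbN
      have hanti : osc16 g t r ≤ osc16 g t n := s16_osc_anti hosc n r hcase (by omega)
      rw [Finset.sum_range_succ]
      have hif : ddE g t N n = osc16 g t n := if_pos (by omega)
      rw [hif]
      linarith
    · push_neg at hcase
      have hB := s16_B ht hgE hgO hosc I n (s.erase i₀) (I i₀).1 r hcard' hr1N htra hatr
        (fun i hi => ⟨(hmem i (Finset.mem_of_mem_erase hi)).1,
          (hmem i (Finset.mem_of_mem_erase hi)).2.1, herase i hi⟩)
        (fun i hi j hj hne =>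
          hov i (Finset.mem_of_mem_erase hi) j (Finset.mem_of_mem_erase hj) hne)
      by_cases hbr : (I i₀).2 ≤ t (r + 1)
      · have h1 := s16_piece hgE hgO hr1N le_rfl htra hatr
        have h2 := s16_piece hgE hgO hr1N htra (le_of_lt hab) hbr
        have h4 := s16_piece hgE hgO hr1N (htra.trans (le_of_lt hab)) hbr le_rfl
        have hoscr := s16_osc_eq ht hgE hgO hr1N
        have hkey : |g (I i₀).1 - g (t r)| + |g (I i₀).2 - g (I i₀).1| ≤ osc16 g t r := by
          rcases s16_eps r with he|he <;> rw [he] at h1 h2 h4 hoscr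
          · rw [abs_of_nonneg (by linarith : (0:ℝ) ≤ g (I i₀).1 - g (t r)),
              abs_of_nonneg (by linarith : (0:ℝ) ≤ g (I i₀).2 - g (I i₀).1)]
            linarith
          · rw [abs_of_nonpos (by linarith : g (I i₀).1 - g (t r) ≤ 0),
              abs_of_nonpos (by linarith : g (I i₀).2 - g (I i₀).1 ≤ 0)]
            linarith
        have hstep : (∑ p ∈ Finset.range (r+1), osc16 g t p) ≤
            ∑ p ∈ Finset.range (n+1), ddE g t N p := by
          calc ∑ p ∈ Finset.range (r+1), osc16 g t p
              = ∑ p ∈ Finset.range (r+1), ddE g t N p :=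
                Finset.sum_congr rfl (fun p hp => by
                  have := Finset.mem_range.mp hp
                  exact (if_pos (by omega)).symm)
            _ ≤ ∑ p ∈ Finset.range (n+1), ddE g t N p :=
                Finset.sum_le_sum_of_subset_of_nonneg
                  (Finset.range_subset_range.mpr (by omega))
                  (fun p _ _ => ddE_nonneg g t N p)
        have hrs : ∑ p ∈ Finset.range (r+1), osc16 g t p =
            (∑ p ∈ Finset.range r, osc16 g t p) + osc16 g t r :=
          Finset.sum_range_succ _ _
        linarith
      · push_neg at hbr
        have hr2N : r + 2 ≤ N := by
          by_contra h
          have hre : r + 1 = N := by omega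
          rw [hre] at hbr; linarith
        have hX : |g (I i₀).2 - g (t (r+1))| ≤ osc16 g t (r+1) :=
          s16_A ht hgE hgO hosc hr2N le_rfl (le_of_lt (ht (r+1) hr2N))
            (le_of_lt hbr) hbN
        have h1 := s16_piece hgE hgO hr1N le_rfl htra hatr
        have h4 := s16_piece hgE hgO hr1N htra hatr le_rfl
        have hoscr := s16_osc_eq ht hgE hgO hr1N
        have hsum_r : |g (I i₀).1 - g (t r)| + |g (t (r+1)) - g (I i₀).1| ≤
            osc16 g t r := by
          rcases s16_eps r with he|he <;> rw [he] at h1 h4 hoscr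
          · rw [abs_of_nonneg (by linarith : (0:ℝ) ≤ g (I i₀).1 - g (t r)),
              abs_of_nonneg (by linarith : (0:ℝ) ≤ g (t (r+1)) - g (I i₀).1)]
            linarith
          · rw [abs_of_nonpos (by linarith : g (I i₀).1 - g (t r) ≤ 0),
              abs_of_nonpos (by linarith : g (t (r+1)) - g (I i₀).1 ≤ 0)]
            linarith
        have htri := abs_sub_le (g (I i₀).2) (g (t (r+1))) (g (I i₀).1)
        have hstep : (∑ p ∈ Finset.range (r+2), osc16 g t p) ≤
            ∑ p ∈ Finset.range (n+1), ddE g t N p := by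
          calc ∑ p ∈ Finset.range (r+2), osc16 g t p
              = ∑ p ∈ Finset.range (r+2), ddE g t N p :=
                Finset.sum_congr rfl (fun p hp => by
                  have := Finset.mem_range.mp hp
                  exact (if_pos (by omega)).symm)
            _ ≤ ∑ p ∈ Finset.range (n+1), ddE g t N p :=
                Finset.sum_le_sum_of_subset_of_nonneg
                  (Finset.range_subset_range.mpr (by omega))
                  (fun p _ _ => ddE_nonneg g t N p)
        have hrs : ∑ p ∈ Finset.range (r+2), osc16 g t p =
            ((∑ p ∈ Finset.range r, osc16 g t p) + osc16 g t r) + osc16 g t (r+1) := by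
          rw [Finset.sum_range_succ, Finset.sum_range_succ]
        linarith

private lemma s16_abel (n : ℕ) (a b c : ℕ → ℝ) (hc0 : ∀ i, 0 ≤ c i)
    (hcm : ∀ i, c (i + 1) ≤ c i)
    (hAB : ∀ k, k ≤ n → ∑ i ∈ Finset.range k, a i ≤ ∑ i ∈ Finset.range k, b i) :
    ∑ i ∈ Finset.range n, a i * c i ≤ ∑ i ∈ Finset.range n, b i * c i := by
  have ha : ∀ f : ℕ → ℝ, ∑ i ∈ Finset.range n, f i * c i =
      c (n-1) * (∑ i ∈ Finset.range n, f i) -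
        ∑ i ∈ Finset.range (n-1), (c (i+1) - c i) * (∑ j ∈ Finset.range (i+1), f j) := by
    intro f
    have h := Finset.sum_range_by_parts c f n
    simp only [smul_eq_mul] at h
    calc ∑ i ∈ Finset.range n, f i * c i
        = ∑ i ∈ Finset.range n, c i * f i :=
          Finset.sum_congr rfl (fun i _ => mul_comm _ _)
      _ = _ := h
  rw [ha a, ha b]
  have h1 : c (n-1) * (∑ i ∈ Finset.range n, a i) ≤
      c (n-1) * (∑ i ∈ Finset.range n, b i) :=
    mul_le_mul_of_nonneg_left (hAB n le_rfl) (hc0 _)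
  have h2 : ∑ i ∈ Finset.range (n-1), (c (i+1) - c i) * (∑ j ∈ Finset.range (i+1), b j) ≤
      ∑ i ∈ Finset.range (n-1), (c (i+1) - c i) * (∑ j ∈ Finset.range (i+1), a j) := by
    apply Finset.sum_le_sum
    intro i hi
    have hin : i + 1 ≤ n := by have := Finset.mem_range.mp hi; omega
    have hle := hAB (i+1) hin
    have hcn : c (i+1) - c i ≤ 0 := by linarith [hcm i]
    nlinarith [mul_nonneg (neg_nonneg.mpr hcn) (sub_nonneg.mpr hle)]
  linarith

end Statement16Aux

/-- if `g` is alternately increasing and decreasing on the intervals of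
the partition `0 = t_1 < t_2 < … < t_{2m} = 2π` (here `0`-indexed as `t 0, …, t (2m-1)`)
and its successive oscillations strictly decrease, then for any nondecreasing positive
sequence `Λ` with `λ_n → ∞` the `Λ`-variation of `g` equals
`∑_{i=1}^{2m-1} |g(t_{i+1}) − g(t_i)|/λ_i`. -/
theorem statement16 (g : ℝ → ℝ) (m : ℕ) (hm : 1 ≤ m) (t : ℕ → ℝ)
    (ht0 : t 0 = 0) (htlast : t (2 * m - 1) = 2 * π)
    (htmono : ∀ i : ℕ, i + 1 < 2 * m → t i < t (i + 1))
    (hg : ∀ i : ℕ, i + 1 < 2 * m →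
      (i % 2 = 0 → MonotoneOn g (Set.Icc (t i) (t (i + 1)))) ∧
      (i % 2 = 1 → AntitoneOn g (Set.Icc (t i) (t (i + 1)))))
    (hosc : ∀ i : ℕ, i + 2 < 2 * m →
      |g (t (i + 2)) - g (t (i + 1))| < |g (t (i + 1)) - g (t i)|)
    (Λ : ℕ → ℝ) (hΛpos : ∀ n, 0 < Λ (n + 1)) (hΛmono : ∀ n, Λ (n + 1) ≤ Λ (n + 2))
    (hΛtop : Tendsto (fun n : ℕ => Λ (n + 1)) atTop atTop) :
    VarG Λ g =
      ENNReal.ofReal (∑ i ∈ Finset.range (2 * m - 1),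
        |g (t (i + 1)) - g (t i)| / Λ (i + 1)) := by
  classical
  set N := 2 * m - 1 with hN_def
  have hN1 : 1 ≤ N := by omega
  have ht : ∀ i, i + 1 ≤ N → t i < t (i + 1) := fun i hi => htmono i (by omega)
  have hgE : ∀ p, p + 1 ≤ N → p % 2 = 0 → MonotoneOn g (Set.Icc (t p) (t (p + 1))) :=
    fun p hp => (hg p (by omega)).1
  have hgO : ∀ p, p + 1 ≤ N → p % 2 = 1 → AntitoneOn g (Set.Icc (t p) (t (p + 1))) :=
    fun p hp => (hg p (by omega)).2
  have hoscle : ∀ p, p + 2 ≤ N → osc16 g t (p + 1) ≤ osc16 g t p :=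
    fun p hp => le_of_lt (hosc p (by omega))
  have htm := s16_tmono ht
  have hgoal : (∑ i ∈ Finset.range N, |g (t (i + 1)) - g (t i)| / Λ (i + 1)) =
      ∑ i ∈ Finset.range N, osc16 g t i / Λ (i + 1) := rfl
  rw [hgoal]
  apply le_antisymm
  · -- upper bound
    rw [VarG]
    refine iSup_le fun n => iSup_le fun I => ?_
    obtain ⟨I, hI⟩ := I
    set J : ℕ → ℝ × ℝ := fun i => if h : i < n then I ⟨i, h⟩ else (0, 0) with hJ
    have hJeq : ∀ i : ℕ, ∀ h : i < n, J i = I ⟨i, h⟩ := fun i h => dif_pos h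
    have hsum : (∑ i : Fin n, ENNReal.ofReal (|g ((I i).2) - g ((I i).1)| / Λ (i.1 + 1))) =
        ENNReal.ofReal (∑ i ∈ Finset.range n, |g ((J i).2) - g ((J i).1)| / Λ (i + 1)) := by
      rw [ENNReal.ofReal_sum_of_nonneg
        (fun i _ => div_nonneg (abs_nonneg _) (le_of_lt (hΛpos i)))]
      rw [← Fin.sum_univ_eq_sum_range
        (fun i => ENNReal.ofReal (|g ((J i).2) - g ((J i).1)| / Λ (i + 1))) n]
      refine Finset.sum_congr rfl (fun i _ => ?_)
      rw [hJeq i.1 i.isLt]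
    rw [hsum]
    apply ENNReal.ofReal_le_ofReal
    have hAB : ∀ k, k ≤ n → ∑ i ∈ Finset.range k, |g ((J i).2) - g ((J i).1)| ≤
        ∑ p ∈ Finset.range k, ddE g t N p := by
      intro k hk
      refine s16_C ht hgE hgO hoscle J k (Finset.range k) (Finset.card_range k) ?_ ?_
      · intro i hi
        have hik : i < n := lt_of_lt_of_le (Finset.mem_range.mp hi) hk
        rw [hJeq i hik]
        obtain ⟨h1, h2, h3⟩ := hI.1 ⟨i, hik⟩
        exact ⟨by rw [ht0]; exact h1, h2, by rw [htlast]; exact h3⟩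
      · intro i hi j hj hne
        have hik : i < n := lt_of_lt_of_le (Finset.mem_range.mp hi) hk
        have hjk : j < n := lt_of_lt_of_le (Finset.mem_range.mp hj) hk
        rw [hJeq i hik, hJeq j hjk]
        exact hI.2 ⟨i, hik⟩ ⟨j, hjk⟩ (by simpa [Fin.ext_iff] using hne)
    have habel : ∑ i ∈ Finset.range n, |g ((J i).2) - g ((J i).1)| * (Λ (i + 1))⁻¹ ≤
        ∑ i ∈ Finset.range n, ddE g t N i * (Λ (i + 1))⁻¹ :=
      s16_abel n _ _ (fun i => (Λ (i + 1))⁻¹)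
        (fun i => le_of_lt (inv_pos.mpr (hΛpos i)))
        (fun i => inv_anti₀ (hΛpos i) (hΛmono i))
        hAB
    have htail : ∑ i ∈ Finset.range n, ddE g t N i * (Λ (i + 1))⁻¹ ≤
        ∑ i ∈ Finset.range N, osc16 g t i / Λ (i + 1) := by
      have hnn : ∀ i : ℕ, 0 ≤ ddE g t N i * (Λ (i + 1))⁻¹ :=
        fun i => mul_nonneg (ddE_nonneg g t N i) (le_of_lt (inv_pos.mpr (hΛpos i)))
      calc ∑ i ∈ Finset.range n, ddE g t N i * (Λ (i + 1))⁻¹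
          ≤ ∑ i ∈ Finset.range (n + N), ddE g t N i * (Λ (i + 1))⁻¹ :=
            Finset.sum_le_sum_of_subset_of_nonneg
              (Finset.range_subset_range.mpr (by omega)) (fun i _ _ => hnn i)
        _ = ∑ i ∈ Finset.range N, ddE g t N i * (Λ (i + 1))⁻¹ := by
            refine (Finset.sum_subset (Finset.range_subset_range.mpr (by omega)) ?_).symm
            intro x hx hnx
            have hxN : N ≤ x := by
              have := Finset.mem_range.not.mp hnx; omega
            rw [ddE, if_neg (by omega), zero_mul]
        _ = ∑ i ∈ Finset.range N, osc16 g t i / Λ (i + 1) := by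
            refine Finset.sum_congr rfl (fun i hi => ?_)
            have hiN := Finset.mem_range.mp hi
            rw [ddE, if_pos (by omega), div_eq_mul_inv]
    calc ∑ i ∈ Finset.range n, |g ((J i).2) - g ((J i).1)| / Λ (i + 1)
        = ∑ i ∈ Finset.range n, |g ((J i).2) - g ((J i).1)| * (Λ (i + 1))⁻¹ :=
          Finset.sum_congr rfl (fun i _ => div_eq_mul_inv _ _)
      _ ≤ ∑ i ∈ Finset.range n, ddE g t N i * (Λ (i + 1))⁻¹ := habel
      _ ≤ ∑ i ∈ Finset.range N, osc16 g t i / Λ (i + 1) := htail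
  · -- lower bound
    have hNO : Nonoverlapping (fun i : Fin N => (t i.1, t (i.1 + 1))) := by
      constructor
      · intro i
        refine ⟨?_, ht i.1 i.isLt, ?_⟩
        · rw [← ht0]; exact htm 0 i.1 (Nat.zero_le _) (by omega)
        · rw [← htlast]; exact htm (i.1 + 1) N i.isLt le_rfl
      · intro i j hne
        have hv : i.1 ≠ j.1 := fun h => hne (Fin.ext h)
        rcases lt_or_gt_of_ne hv with h|h
        · left; exact htm (i.1 + 1) j.1 (by omega) (by omega)
        · right; exact htm (j.1 + 1) i.1 (by omega) (by omega)
    have heq : ENNReal.ofReal (∑ i ∈ Finset.range N, osc16 g t i / Λ (i + 1)) =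
        ∑ i : Fin N, ENNReal.ofReal (osc16 g t i.1 / Λ (i.1 + 1)) := by
      rw [ENNReal.ofReal_sum_of_nonneg (f := fun i => osc16 g t i / Λ (i + 1))
        (s := Finset.range N)
        (fun i _ => div_nonneg (abs_nonneg _) (le_of_lt (hΛpos i)))]
      exact (Fin.sum_univ_eq_sum_range
        (fun i => ENNReal.ofReal (osc16 g t i / Λ (i + 1))) N).symm
    rw [heq]
    refine le_trans ?_ (le_iSup (fun n => ⨆ I : {I : Fin n → ℝ × ℝ // Nonoverlapping I},
      ∑ i : Fin n, ENNReal.ofReal (|g ((I.1 i).2) - g ((I.1 i).1)| / Λ (i.1 + 1))) N)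
    refine le_trans ?_ (le_iSup (fun I : {I : Fin N → ℝ × ℝ // Nonoverlapping I} =>
      ∑ i : Fin N, ENNReal.ofReal (|g ((I.1 i).2) - g ((I.1 i).1)| / Λ (i.1 + 1)))
      ⟨fun i : Fin N => (t i.1, t (i.1 + 1)), hNO⟩)
    exact le_of_eq rfl
end
end
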